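/- arXiv:2001.05497 — 10 statements merged into one kernel-verified Lean document; each statement's English description precedes it below -/
import Mathlib

section
/- Let d ≥ 1 be an integer and let C be a finite set of n distinct points in ℝ^d with n > 24·d·log₂(d+1). Then there exists a point y ∈ C and real coefficients (a_x)_{x ∈ C∖{y}} such that Σ_{x ∈ C∖{y}} a_x = 1, Σ_{x ∈ C∖{y}} a_x·x = y, and Σ_{x ∈ C∖{y}} |a_x| ≤ d+1. -/
open Finset

open scoped Classical in
private lemma cluster_aux {d : ℕ} (C t : Finset (EuclideanSpace ℝ (Fin d))) (ht : t ⊆ C)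
    (f : EuclideanSpace ℝ (Fin d) → ℝ)
    (hvec : ∑ e ∈ t, f e • e = 0) (hsum : ∑ e ∈ t, f e = 0)
    (hPne : ∃ x ∈ t, 0 < f x)
    (hPcard : 2 * (t.filter (fun x => 0 < f x)).card ≤ d + 2) :
    letI : DecidableEq (EuclideanSpace ℝ (Fin d)) := Classical.decEq _
    ∃ y ∈ C, ∃ a : EuclideanSpace ℝ (Fin d) → ℝ,
      (∑ x ∈ C.erase y, a x = 1) ∧
      (∑ x ∈ C.erase y, a x • x = y) ∧
      (∑ x ∈ C.erase y, |a x| ≤ (d : ℝ) + 1) := by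
  letI : DecidableEq (EuclideanSpace ℝ (Fin d)) := Classical.decEq _
  set P := t.filter (fun x => 0 < f x) with hP
  have hPnonempty : P.Nonempty := by
    obtain ⟨x, hx, hfx⟩ := hPne
    exact ⟨x, mem_filter.mpr ⟨hx, hfx⟩⟩
  obtain ⟨y, hyP, hymax⟩ := P.exists_max_image f hPnonempty
  have hyt : y ∈ t := (mem_filter.mp hyP).1
  have hfy : 0 < f y := (mem_filter.mp hyP).2
  set a : EuclideanSpace ℝ (Fin d) → ℝ :=
    fun x => if x ∈ t.erase y then -f x / f y else 0 with ha
  have hsub : t.erase y ⊆ C.erase y := erase_subset_erase y ht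
  have hzero : ∀ x ∈ C.erase y, x ∉ t.erase y → a x = 0 := by
    intro x _ hx; simp only [ha, if_neg hx]
  have hsum_erase : ∑ x ∈ t.erase y, f x = -f y := by
    rw [Finset.sum_erase_eq_sub hyt, hsum]; ring
  have hvec_erase : ∑ x ∈ t.erase y, f x • x = -(f y • y) := by
    rw [Finset.sum_erase_eq_sub hyt, hvec]; abel
  refine ⟨y, ht hyt, a, ?_, ?_, ?_⟩
  · rw [← Finset.sum_subset hsub hzero]
    have : ∑ x ∈ t.erase y, a x = (∑ x ∈ t.erase y, -f x) * (f y)⁻¹ := by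
      rw [Finset.sum_mul]
      refine Finset.sum_congr rfl fun x hx => ?_
      simp only [ha, if_pos hx, div_eq_mul_inv]
    rw [this, Finset.sum_neg_distrib, hsum_erase, neg_neg, mul_inv_cancel₀ hfy.ne']
  · rw [← Finset.sum_subset hsub (fun x hx hx' => by rw [hzero x hx hx', zero_smul])]
    have : ∑ x ∈ t.erase y, a x • x = (-(f y)⁻¹) • ∑ x ∈ t.erase y, f x • x := by
      rw [Finset.smul_sum]
      refine Finset.sum_congr rfl fun x hx => ?_
      rw [smul_smul]
      congr 1
      simp only [ha, if_pos hx]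
      field_simp
    rw [this, hvec_erase, smul_neg, neg_smul, neg_neg, smul_smul, inv_mul_cancel₀ hfy.ne',
      one_smul]
  · rw [← Finset.sum_subset hsub (fun x hx hx' => by rw [hzero x hx hx', abs_zero])]
    have habs : ∀ x ∈ t.erase y, |a x| = |f x| / f y := by
      intro x hx
      simp only [ha, if_pos hx, abs_div, abs_neg, abs_of_pos hfy]
    rw [Finset.sum_congr rfl habs, ← Finset.sum_div, Finset.sum_erase_eq_sub hyt,
      abs_of_pos hfy]
    have h2 : ∑ x ∈ t, |f x| = 2 * ∑ x ∈ P, f x := by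
      have key : ∀ x ∈ t, |f x| = 2 * (if 0 < f x then f x else 0) - f x := by
        intro x _
        rcases lt_trichotomy (f x) 0 with h | h | h
        · rw [if_neg (by linarith), abs_of_neg h]; ring
        · simp [h]
        · rw [if_pos h, abs_of_pos h]; ring
      rw [Finset.sum_congr rfl key, Finset.sum_sub_distrib, hsum, sub_zero, ← Finset.mul_sum,
        ← Finset.sum_filter]
    rw [h2]
    have hT : ∑ x ∈ P, f x ≤ (P.card : ℝ) * f y := by
      have := Finset.sum_le_card_nsmul P f (f y) hymax
      simpa [nsmul_eq_mul] using this
    have hPc : (2 : ℝ) * P.card ≤ (d : ℝ) + 2 := by exact_mod_cast hPcard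
    rw [div_le_iff₀ hfy]
    nlinarith [mul_le_mul_of_nonneg_right hPc hfy.le]

/-- Every finite set `C` of `n` distinct points in `ℝ^d` with
`n > 24·d·log₂(d+1)` contains a point `y` expressible as an affine combination of the
remaining points with coefficient ℓ¹-norm at most `d+1`. -/
theorem cluster_inference_core (d n : ℕ) (hd : 1 ≤ d)
    (C : Finset (EuclideanSpace ℝ (Fin d))) (hcard : C.card = n)
    (hn : (24 : ℝ) * d * Real.logb 2 (d + 1) < n) :
    letI : DecidableEq (EuclideanSpace ℝ (Fin d)) := Classical.decEq _
    ∃ y ∈ C, ∃ a : EuclideanSpace ℝ (Fin d) → ℝ,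
      (∑ x ∈ C.erase y, a x = 1) ∧
      (∑ x ∈ C.erase y, a x • x = y) ∧
      (∑ x ∈ C.erase y, |a x| ≤ (d : ℝ) + 1) := by
  classical
  have hd1 : (1 : ℝ) ≤ d := by exact_mod_cast hd
  have hlog : (1 : ℝ) ≤ Real.logb 2 (d + 1) := by
    calc (1:ℝ) = Real.logb 2 2 := by simp
      _ ≤ Real.logb 2 (d + 1) :=
        Real.logb_le_logb_of_le (by norm_num) (by norm_num) (by linarith)
  have hdn : d + 2 ≤ n := by
    have h1 : ((d : ℝ) + 2) ≤ 24 * d * Real.logb 2 (d + 1) := by nlinarith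
    have : ((d : ℝ) + 2) < n := lt_of_le_of_lt h1 hn
    exact_mod_cast this.le
  obtain ⟨t, htC, htcard⟩ := Finset.exists_subset_card_eq (show d + 2 ≤ C.card by omega)
  obtain ⟨f, hvec, hsum, x0, hx0t, hx0⟩ :=
    Module.exists_nontrivial_relation_sum_zero_of_finrank_succ_lt_card (R := ℝ)
      (show Module.finrank ℝ (EuclideanSpace ℝ (Fin d)) + 1 < t.card by
        rw [finrank_euclideanSpace_fin]; omega)
  set P := t.filter (fun x => 0 < f x) with hP
  set N := t.filter (fun x => f x < 0) with hN
  have hPne : ∃ x ∈ t, 0 < f x := by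
    by_contra h
    push_neg at h
    have hx0neg : f x0 < 0 := lt_of_le_of_ne (h x0 hx0t) hx0
    have : (0:ℝ) < ∑ x ∈ t, -f x :=
      Finset.sum_pos' (fun x hx => by linarith [h x hx]) ⟨x0, hx0t, by linarith⟩
    rw [Finset.sum_neg_distrib, hsum] at this
    linarith
  have hNne : ∃ x ∈ t, f x < 0 := by
    by_contra h
    push_neg at h
    have hx0pos : 0 < f x0 := lt_of_le_of_ne (h x0 hx0t) (Ne.symm hx0)
    have : (0:ℝ) < ∑ x ∈ t, f x :=
      Finset.sum_pos' (fun x hx => h x hx) ⟨x0, hx0t, hx0pos⟩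
    rw [hsum] at this; linarith
  have hdisj : Disjoint P N := by
    rw [Finset.disjoint_left]
    intro x hx hx'
    have h1 := (mem_filter.mp hx).2
    have h2 := (mem_filter.mp hx').2
    linarith
  have hcards : P.card + N.card ≤ d + 2 := by
    rw [← Finset.card_union_of_disjoint hdisj]
    calc (P ∪ N).card ≤ t.card :=
          Finset.card_le_card (Finset.union_subset (filter_subset _ _) (filter_subset _ _))
      _ = d + 2 := htcard
  by_cases hc : P.card ≤ N.card
  · exact cluster_aux C t htC f hvec hsum hPne (by rw [← hP]; omega)
  · have hfilt : t.filter (fun x => 0 < -f x) = N := by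
      rw [hN]
      apply Finset.filter_congr
      intro x _
      simp [neg_pos]
    refine cluster_aux C t htC (fun x => -f x) ?_ ?_ ?_ ?_
    · simp only [neg_smul, Finset.sum_neg_distrib, hvec, neg_zero]
    · simp only [Finset.sum_neg_distrib, hsum, neg_zero]
    · obtain ⟨x, hx, hfx⟩ := hNne; exact ⟨x, hx, neg_pos.mpr hfx⟩
    · rw [hfilt]; omega
end

section
/- Let d ≥ 1 and n ≥ 1 be integers, let x₁, …, xₙ ∈ ℝ^d and y ∈ ℝ^d. Suppose that there is no vector a ∈ ℝⁿ satisfying Σᵢ aᵢ = 1, Σᵢ aᵢ·xᵢ = y, and Σᵢ |aᵢ| ≤ d+1. Then there exists an affine function L : ℝ^d → ℝ such that L(y) − maxᵢ L(xᵢ) > (d/2)·(maxᵢ L(xᵢ) − minᵢ L(xᵢ)) ≥ 0. -/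
/-- If `y` is not an affine combination of `x₁,…,xₙ` with coefficient ℓ¹-norm
at most `d+1`, then some affine functional `L` satisfies
`L(y) − maxᵢ L(xᵢ) > (d/2)·(maxᵢ L(xᵢ) − minᵢ L(xᵢ)) ≥ 0`. -/
theorem separation_from_infeasibility (d n : ℕ) (hd : 1 ≤ d) (hn : 1 ≤ n)
    (x : Fin n → EuclideanSpace ℝ (Fin d)) (y : EuclideanSpace ℝ (Fin d))
    (h : ¬ ∃ a : Fin n → ℝ,
        (∑ i, a i = 1) ∧ (∑ i, a i • x i = y) ∧ (∑ i, |a i| ≤ (d : ℝ) + 1)) :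
    ∃ L : EuclideanSpace ℝ (Fin d) →ᵃ[ℝ] ℝ,
      (d : ℝ) / 2 *
          (Finset.univ.sup' (Finset.univ_nonempty_iff.mpr (Fin.pos_iff_nonempty.mp hn))
              (fun i => L (x i)) -
            Finset.univ.inf' (Finset.univ_nonempty_iff.mpr (Fin.pos_iff_nonempty.mp hn))
              (fun i => L (x i))) <
        L y -
          Finset.univ.sup' (Finset.univ_nonempty_iff.mpr (Fin.pos_iff_nonempty.mp hn))
            (fun i => L (x i)) ∧
      0 ≤ (d : ℝ) / 2 *
          (Finset.univ.sup' (Finset.univ_nonempty_iff.mpr (Fin.pos_iff_nonempty.mp hn))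
              (fun i => L (x i)) -
            Finset.univ.inf' (Finset.univ_nonempty_iff.mpr (Fin.pos_iff_nonempty.mp hn))
              (fun i => L (x i))) := by
  classical
  have hne : (Finset.univ : Finset (Fin n)).Nonempty :=
    Finset.univ_nonempty_iff.mpr (Fin.pos_iff_nonempty.mp hn)
  set A : Set (Fin n → ℝ) := {a | (∑ i, a i = 1) ∧ (∑ i, |a i| ≤ (d : ℝ) + 1)} with hAdef
  set T : (Fin n → ℝ) → EuclideanSpace ℝ (Fin d) := fun a => ∑ i, a i • x i with hTdef
  have hTcont : Continuous T := by
    apply continuous_finset_sum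
    intro i _
    exact (continuous_apply i).smul continuous_const
  have hAclosed : IsClosed A := by
    have h1 : IsClosed {a : Fin n → ℝ | ∑ i, a i = 1} :=
      isClosed_eq (by continuity) continuous_const
    have h2 : IsClosed {a : Fin n → ℝ | ∑ i, |a i| ≤ (d : ℝ) + 1} := by
      apply isClosed_le _ continuous_const
      exact continuous_finset_sum _ fun i _ => (continuous_apply i).abs
    exact h1.inter h2
  have hAbdd : Bornology.IsBounded A := by
    apply (Metric.isBounded_closedBall (x := (0 : Fin n → ℝ)) (r := (d : ℝ) + 1)).subset
    rintro a ⟨-, ha2⟩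
    rw [Metric.mem_closedBall, dist_zero_right]
    refine (pi_norm_le_iff_of_nonneg (by positivity)).2 fun i => ?_
    calc ‖a i‖ = |a i| := rfl
      _ ≤ ∑ j, |a j| :=
        Finset.single_le_sum (f := fun j => |a j|) (fun j _ => abs_nonneg _) (Finset.mem_univ i)
      _ ≤ (d : ℝ) + 1 := ha2
  have hAcomp : IsCompact A := Metric.isCompact_of_isClosed_isBounded hAclosed hAbdd
  have hKclosed : IsClosed (T '' A) := (hAcomp.image hTcont).isClosed
  have hKconv : Convex ℝ (T '' A) := by
    rintro _ ⟨a, ⟨ha1, ha2⟩, rfl⟩ _ ⟨b, ⟨hb1, hb2⟩, rfl⟩ p q hp hq hpq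
    refine ⟨fun i => p * a i + q * b i, ⟨?_, ?_⟩, ?_⟩
    · rw [Finset.sum_add_distrib, ← Finset.mul_sum, ← Finset.mul_sum, ha1, hb1]
      linarith
    · calc ∑ i, |p * a i + q * b i| ≤ ∑ i, (p * |a i| + q * |b i|) := by
            apply Finset.sum_le_sum; intro i _
            calc |p * a i + q * b i| ≤ |p * a i| + |q * b i| := abs_add_le _ _
              _ = p * |a i| + q * |b i| := by
                  rw [abs_mul, abs_mul, abs_of_nonneg hp, abs_of_nonneg hq]
        _ = p * (∑ i, |a i|) + q * (∑ i, |b i|) := by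
            rw [Finset.sum_add_distrib, Finset.mul_sum, Finset.mul_sum]
        _ ≤ p * ((d : ℝ) + 1) + q * ((d : ℝ) + 1) :=
            add_le_add (mul_le_mul_of_nonneg_left ha2 hp) (mul_le_mul_of_nonneg_left hb2 hq)
        _ = (d : ℝ) + 1 := by rw [← add_mul, hpq, one_mul]
    · simp only [T, Finset.smul_sum, smul_smul, add_smul, Finset.sum_add_distrib]
  have hyK : y ∉ T '' A := by
    rintro ⟨a, ⟨ha1, ha2⟩, hTa⟩
    exact h ⟨a, ha1, by simpa [T] using hTa, ha2⟩
  obtain ⟨f, u, hfu, huy⟩ := geometric_hahn_banach_closed_point hKconv hKclosed hyK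
  obtain ⟨j, -, hj⟩ := Finset.exists_mem_eq_sup' hne (fun i => f (x i))
  obtain ⟨k, -, hk⟩ := Finset.exists_mem_eq_inf' hne (fun i => f (x i))
  set a₀ : Fin n → ℝ :=
    fun i => (if i = j then (1 : ℝ) + (d : ℝ) / 2 else 0) - (if i = k then (d : ℝ) / 2 else 0)
    with ha₀def
  have ha₀A : a₀ ∈ A := by
    constructor
    · rw [Finset.sum_sub_distrib]
      simp [Finset.sum_ite_eq']
    · calc ∑ i, |a₀ i|
          ≤ ∑ i, ((if i = j then (1 : ℝ) + (d : ℝ) / 2 else 0) +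
              (if i = k then (d : ℝ) / 2 else 0)) := by
            apply Finset.sum_le_sum; intro i _
            calc |a₀ i| ≤ |if i = j then (1 : ℝ) + (d : ℝ) / 2 else 0| +
                  |if i = k then (d : ℝ) / 2 else 0| := abs_sub _ _
              _ = _ := by
                  congr 1 <;> apply abs_of_nonneg <;> split <;> positivity
        _ = ((1 : ℝ) + (d : ℝ) / 2) + (d : ℝ) / 2 := by
            rw [Finset.sum_add_distrib]; simp [Finset.sum_ite_eq']
        _ ≤ (d : ℝ) + 1 := by linarith
  have hTa₀ : T a₀ = ((1 : ℝ) + (d : ℝ) / 2) • x j - ((d : ℝ) / 2) • x k := by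
    simp only [T, a₀, sub_smul, ite_smul, zero_smul, Finset.sum_sub_distrib,
      Finset.sum_ite_eq', Finset.mem_univ, if_true]
  have hfa₀ : ((1 : ℝ) + (d : ℝ) / 2) * f (x j) - ((d : ℝ) / 2) * f (x k) < u := by
    have := hfu (T a₀) ⟨a₀, ha₀A, rfl⟩
    rwa [hTa₀, map_sub, map_smul, map_smul, smul_eq_mul, smul_eq_mul] at this
  have hle : Finset.univ.inf' hne (fun i => f (x i)) ≤
      Finset.univ.sup' hne (fun i => f (x i)) := by
    calc Finset.univ.inf' hne (fun i => f (x i)) ≤ f (x j) :=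
          Finset.inf'_le (fun i => f (x i)) (Finset.mem_univ j)
      _ ≤ Finset.univ.sup' hne (fun i => f (x i)) :=
          Finset.le_sup' (fun i => f (x i)) (Finset.mem_univ j)
  have hd2 : (0 : ℝ) ≤ (d : ℝ) / 2 := by positivity
  refine ⟨f.toLinearMap.toAffineMap, ?_, ?_⟩
  · show (d : ℝ) / 2 * (Finset.univ.sup' hne (fun i => f (x i)) -
        Finset.univ.inf' hne (fun i => f (x i))) <
      f y - Finset.univ.sup' hne (fun i => f (x i))
    rw [hj, hk]
    linarith
  · show (0 : ℝ) ≤ (d : ℝ) / 2 * (Finset.univ.sup' hne (fun i => f (x i)) -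
        Finset.univ.inf' hne (fun i => f (x i)))
    nlinarith
end

section
/- Let d ≥ 1 be an integer, let C ⊆ ℝ^d be a finite nonempty set, let y ∈ ℝ^d, and let L : ℝ^d → ℝ be an affine function satisfying L(y) − max_{x∈C} L(x) > (d/2)·(max_{x∈C} L(x) − min_{x∈C} L(x)) ≥ 0. Then vol(convexHull(C ∪ {y})) ≥ (e²/(e²−1))·vol(convexHull(C)). -/
open MeasureTheory Set

/-- A level set of a non-constant affine function is Lebesgue-null. -/
private lemma affine_level_null {d : ℕ} (L : EuclideanSpace ℝ (Fin d) →ᵃ[ℝ] ℝ) (c : ℝ)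
    (z : EuclideanSpace ℝ (Fin d)) (hz : L z ≠ c) :
    volume (L ⁻¹' {c} : Set (EuclideanSpace ℝ (Fin d))) = 0 := by
  have hcoe : ((AffineSubspace.comap L (AffineSubspace.mk' c (⊥ : Submodule ℝ ℝ))) :
      Set (EuclideanSpace ℝ (Fin d))) = L ⁻¹' {c} := by
    rw [AffineSubspace.coe_comap]
    congr 1
    ext x
    simp [AffineSubspace.mem_mk', sub_eq_zero]
  rw [← hcoe]
  apply Measure.addHaar_affineSubspace
  intro htop
  apply hz
  have hzmem : z ∈ (⊤ : AffineSubspace ℝ (EuclideanSpace ℝ (Fin d))) := trivial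
  rw [← htop, AffineSubspace.mem_comap] at hzmem
  simpa [AffineSubspace.mem_mk', sub_eq_zero] using hzmem

set_option maxHeartbeats 1000000 in
/-- If an affine function `L` satisfies
`L(y) − max_{x∈C} L(x) > (d/2)·(max_{x∈C} L(x) − min_{x∈C} L(x)) ≥ 0`, then adding `y` to `C`
multiplies the volume of the convex hull by at least `e²/(e²−1)`. -/
theorem convexHull_volume_expansion (d : ℕ) (hd : 1 ≤ d)
    (C : Finset (EuclideanSpace ℝ (Fin d))) (hC : C.Nonempty)
    (y : EuclideanSpace ℝ (Fin d)) (L : EuclideanSpace ℝ (Fin d) →ᵃ[ℝ] ℝ)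
    (h1 : (d : ℝ) / 2 * (C.sup' hC (fun x => L x) - C.inf' hC (fun x => L x)) <
      L y - C.sup' hC (fun x => L x))
    (h2 : 0 ≤ (d : ℝ) / 2 * (C.sup' hC (fun x => L x) - C.inf' hC (fun x => L x))) :
    ENNReal.ofReal (Real.exp 1 ^ 2 / (Real.exp 1 ^ 2 - 1)) *
        volume (convexHull ℝ (C : Set (EuclideanSpace ℝ (Fin d)))) ≤
      volume (convexHull ℝ (insert y (C : Set (EuclideanSpace ℝ (Fin d))))) := by
  classical
  obtain ⟨x₀, hx₀⟩ := hC
  set M := C.sup' ⟨x₀, hx₀⟩ (fun x => L x) with hMdef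
  set m := C.inf' ⟨x₀, hx₀⟩ (fun x => L x) with hmdef
  have hdpos : (0:ℝ) < d := by exact_mod_cast Nat.lt_of_lt_of_le Nat.zero_lt_one hd
  have hmM : m ≤ M := le_trans (Finset.inf'_le _ hx₀) (Finset.le_sup' _ hx₀)
  have hb : (0:ℝ) < L y - M := lt_of_le_of_lt h2 h1
  set A : Set (EuclideanSpace ℝ (Fin d)) := convexHull ℝ (C : Set (EuclideanSpace ℝ (Fin d)))
    with hAdef
  set K : Set (EuclideanSpace ℝ (Fin d)) :=
    convexHull ℝ (insert y (C : Set (EuclideanSpace ℝ (Fin d)))) with hKdef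
  have hKcomp : IsCompact K := (Set.Finite.insert y C.finite_toSet).isCompact_convexHull ℝ
  have hAcomp : IsCompact A := C.finite_toSet.isCompact_convexHull ℝ
  have hKtop : volume K ≠ ⊤ := hKcomp.measure_lt_top.ne
  have hAtop : volume A ≠ ⊤ := hAcomp.measure_lt_top.ne
  have hAK : A ⊆ K := convexHull_mono (Set.subset_insert _ _)
  have hAle : A ⊆ {z | L z ≤ M} := by
    apply convexHull_min _ ((convex_Iic M).affine_preimage L)
    intro x hx
    exact Finset.le_sup' (fun x => L x) (Finset.mem_coe.mp hx)
  have hKge : K ⊆ {z | m ≤ L z} := by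
    apply convexHull_min _ ((convex_Ici m).affine_preimage L)
    rintro z (rfl | hz)
    · show m ≤ L z; linarith
    · exact Finset.inf'_le (fun x => L x) (Finset.mem_coe.mp hz)
  rcases eq_or_lt_of_le (sub_nonneg.2 hmM) with hw0 | hwpos
  · -- degenerate case M = m : convexHull C is contained in a hyperplane, hence null
    have hAnull : A ⊆ L ⁻¹' {M} := by
      intro z hz
      have h1' : L z ≤ M := hAle hz
      have h2' : m ≤ L z := hKge (hAK hz)
      have : L z = M := le_antisymm h1' (by linarith)
      simpa using this
    have hA0 : volume A = 0 :=
      measure_mono_null hAnull (affine_level_null L M y (by linarith))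
    rw [hA0, mul_zero]
    exact zero_le
  · -- main case M > m
    set w : ℝ := M - m with hwdef
    set b : ℝ := L y - M with hbdef
    set a : ℝ := L y - m with hadef
    have hab : a = b + w := by rw [hadef, hbdef, hwdef]; ring
    have ha : 0 < a := by rw [hab]; linarith
    set t : ℝ := b / a with htdef
    have ht0 : 0 < t := div_pos hb ha
    have ht1 : t ≤ 1 := by rw [htdef, div_le_one ha]; linarith
    set f := AffineMap.homothety y t with hfdef
    set B : Set (EuclideanSpace ℝ (Fin d)) := f '' K with hBdef
    have hyK : y ∈ K := subset_convexHull ℝ _ (Set.mem_insert _ _)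
    have hBK : B ⊆ K := by
      rw [hBdef, hKdef, AffineMap.image_convexHull]
      apply convexHull_min _ (convex_convexHull ℝ _)
      rintro u ⟨x, hx, rfl⟩
      rcases hx with rfl | hx
      · -- f x = x when x = y
        have : f x = x := by simp [hfdef, AffineMap.homothety_apply]
        rw [this]; exact hyK
      · have hxK : x ∈ K := subset_convexHull ℝ _ (Set.mem_insert_of_mem _ hx)
        have hmem := (convex_convexHull ℝ (insert y (C : Set (EuclideanSpace ℝ (Fin d)))))
          hyK hxK (by linarith : (0:ℝ) ≤ 1 - t) ht0.le (by ring)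
        have : f x = (1 - t) • y + t • x := by
          simp only [hfdef, AffineMap.homothety_apply, vsub_eq_sub, vadd_eq_add]
          module
        rw [this]; exact hmem
    have hLf : ∀ z, L (f z) = t * (L z - L y) + L y := by
      intro z
      rw [hfdef, AffineMap.homothety_apply, AffineMap.map_vadd, L.linear.map_smul,
        L.linearMap_vsub]
      simp [vsub_eq_sub, smul_eq_mul, vadd_eq_add]
    have hBge : B ⊆ {z | M ≤ L z} := by
      rintro u ⟨z, hz, rfl⟩
      have hmz : m ≤ L z := hKge hz
      show M ≤ L (f z)
      rw [hLf z]
      have hta : t * a = b := div_mul_cancel₀ b ha.ne'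
      have : t * (L y - L z) ≤ t * a := by
        apply mul_le_mul_of_nonneg_left _ ht0.le
        simp only [hadef]; linarith
      nlinarith [this, hta]
    have hABnull : volume (A ∩ B) = 0 := by
      apply measure_mono_null (t := L ⁻¹' {M}) _ (affine_level_null L M y (by linarith))
      rintro z ⟨hzA, hzB⟩
      have h1' : L z ≤ M := hAle hzA
      have h2' : M ≤ L z := hBge hzB
      simpa using le_antisymm h1' h2'
    have hBmeas : MeasurableSet B :=
      (hKcomp.image (AffineMap.homothety_continuous y t)).measurableSet
    have hsum : volume A + volume B ≤ volume K := by
      have h' := measure_union_add_inter A hBmeas (μ := volume)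
      rw [hABnull, add_zero] at h'
      rw [← h']
      exact measure_mono (Set.union_subset hAK hBK)
    have hB : volume B = ENNReal.ofReal (t ^ d) * volume K := by
      rw [hBdef, hfdef, Measure.addHaar_image_homothety]
      congr 2
      rw [finrank_euclideanSpace_fin]
      exact abs_of_pos (pow_pos ht0 d)
    -- pass to real numbers
    set k : ℝ := (volume K).toReal with hkdef
    set v : ℝ := (volume A).toReal with hvdef
    have hk0 : 0 ≤ k := ENNReal.toReal_nonneg
    have hv0 : 0 ≤ v := ENNReal.toReal_nonneg
    have hc0 : 0 ≤ t ^ d := (pow_pos ht0 d).le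
    have hvk : v + t ^ d * k ≤ k := by
      have h' : volume A + ENNReal.ofReal (t ^ d) * volume K ≤ volume K := by
        rw [← hB]; exact hsum
      have h'' := ENNReal.toReal_mono hKtop h'
      rwa [ENNReal.toReal_add hAtop (ENNReal.mul_ne_top ENNReal.ofReal_ne_top hKtop),
        ENNReal.toReal_mul, ENNReal.toReal_ofReal hc0] at h''
    -- the key numeric inequality :  t ^ d ≥ e⁻²
    have hE : (1:ℝ) < Real.exp 1 ^ 2 := by
      nlinarith [Real.exp_one_gt_d9]
    have hEpos : (0:ℝ) < Real.exp 1 ^ 2 := by linarith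
    have htd : (Real.exp 1 ^ 2)⁻¹ ≤ t ^ d := by
      have hd2 : (0:ℝ) < (d:ℝ) + 2 := by linarith
      have hstep1 : (d:ℝ) / ((d:ℝ) + 2) ≤ t := by
        rw [htdef, div_le_div_iff₀ hd2 ha, hab]
        have hbw : (d:ℝ) / 2 * w < b := h1
        nlinarith [hbw, hwpos]
      have hbase0 : (0:ℝ) ≤ (d:ℝ) / ((d:ℝ) + 2) := by positivity
      have hstep2 : ((d:ℝ) / ((d:ℝ) + 2)) ^ d ≤ t ^ d := pow_le_pow_left₀ hbase0 hstep1 d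
      have hexp : ((1:ℝ) + 2 / d) ^ d ≤ Real.exp 1 ^ 2 := by
        have h1e : (1:ℝ) + 2 / d ≤ Real.exp (2 / d) := by
          have := Real.add_one_le_exp (2 / (d:ℝ)); linarith
        have h2e : ((1:ℝ) + 2 / d) ^ d ≤ Real.exp (2 / d) ^ d :=
          pow_le_pow_left₀ (by positivity) h1e d
        have h3e : Real.exp (2 / (d:ℝ)) ^ d = Real.exp 2 := by
          rw [← Real.exp_nat_mul]
          congr 1
          field_simp
        rw [h3e] at h2e
        have : Real.exp 1 ^ 2 = Real.exp 2 := by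
          rw [← Real.exp_nat_mul]; norm_num
        rw [this]
        exact h2e
      have hinv : (Real.exp 1 ^ 2)⁻¹ ≤ (((1:ℝ) + 2 / d) ^ d)⁻¹ := by
        apply inv_anti₀ _ hexp
        positivity
      have heq : (((1:ℝ) + 2 / d) ^ d)⁻¹ = ((d:ℝ) / ((d:ℝ) + 2)) ^ d := by
        rw [← inv_pow]
        congr 1
        rw [inv_eq_one_div]
        field_simp
      rw [heq] at hinv
      exact le_trans hinv hstep2
    -- conclude
    rw [← ENNReal.ofReal_toReal hKtop, ← ENNReal.ofReal_toReal hAtop, ← hkdef, ← hvdef,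
      ← ENNReal.ofReal_mul (div_nonneg hEpos.le (by linarith))]
    apply ENNReal.ofReal_le_ofReal
    rw [div_mul_eq_mul_div, div_le_iff₀ (by linarith : (0:ℝ) < Real.exp 1 ^ 2 - 1)]
    have hcE : (1:ℝ) ≤ Real.exp 1 ^ 2 * t ^ d := by
      calc (1:ℝ) = Real.exp 1 ^ 2 * (Real.exp 1 ^ 2)⁻¹ := by
            rw [mul_inv_cancel₀ hEpos.ne']
        _ ≤ Real.exp 1 ^ 2 * t ^ d := mul_le_mul_of_nonneg_left htd hEpos.le
    nlinarith [mul_le_mul_of_nonneg_left hvk hEpos.le, mul_nonneg hk0 (sub_nonneg.2 hcE)]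
end

section
/- Let d ≥ 1 be an integer and let C ⊆ ℝ^d be a finite set of n points with n ≥ d+1. Then vol(convexHull(C)) ≤ binom(n, d) · max{ vol(convexHull(S)) : S ⊆ C, |S| = d+1 }, i.e. the volume of the convex hull of C is at most the binomial coefficient (n choose d) times the volume of the largest simplex with vertices in C. -/
open MeasureTheory Finset

/-- Cone covering: if `x` lies in a full-dimensional simplex `conv S`, then for any point `v`,
`x` lies in the cone from `v` over one of the facets of `S`. -/
lemma cone_cover {d : ℕ} (S : Finset (EuclideanSpace ℝ (Fin d)))
    (hai : AffineIndependent ℝ ((↑) : ↥S → EuclideanSpace ℝ (Fin d)))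
    (hScard : S.card = d + 1) (v : EuclideanSpace ℝ (Fin d))
    {x : EuclideanSpace ℝ (Fin d)}
    (hx : x ∈ convexHull ℝ (S : Set (EuclideanSpace ℝ (Fin d)))) :
    ∃ w ∈ S, x ∈ convexHull ℝ
      (insert v ((S : Set (EuclideanSpace ℝ (Fin d))) \ {w})) := by
  classical
  have htop : affineSpan ℝ (Set.range ((↑) : ↥S → EuclideanSpace ℝ (Fin d))) = ⊤ := by
    rw [hai.affineSpan_eq_top_iff_card_eq_finrank_add_one]
    simp [hScard, finrank_euclideanSpace_fin]
  let b : AffineBasis ↥S ℝ (EuclideanSpace ℝ (Fin d)) := ⟨_, hai, htop⟩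
  have hrange : Set.range ⇑b = (S : Set (EuclideanSpace ℝ (Fin d))) := Subtype.range_coe
  have hxc : ∀ i, 0 ≤ b.coord i x := by
    rw [← hrange, b.convexHull_eq_nonneg_coord] at hx
    exact hx
  have hSne : S.Nonempty := Finset.card_pos.mp (by omega)
  by_cases hvx : ∀ i, b.coord i v ≤ b.coord i x
  · -- then v = x
    have hxv : x = v := by
      apply b.ext_elem
      intro i
      have h1 : ∑ j, (b.coord j x - b.coord j v) = 0 := by
        rw [Finset.sum_sub_distrib, b.sum_coord_apply_eq_one, b.sum_coord_apply_eq_one, sub_self]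
      have h2 : ∀ j ∈ Finset.univ, (0:ℝ) ≤ b.coord j x - b.coord j v := by
        intro j _; linarith [hvx j]
      have := (Finset.sum_eq_zero_iff_of_nonneg h2).mp h1 i (Finset.mem_univ i)
      linarith
    obtain ⟨w, hw⟩ := hSne
    exact ⟨w, hw, hxv ▸ subset_convexHull ℝ _ (Set.mem_insert _ _)⟩
  · push_neg at hvx
    set A : Finset ↥S := Finset.univ.filter (fun i => b.coord i x < b.coord i v) with hA
    have hAne : A.Nonempty := by
      obtain ⟨i, hi⟩ := hvx
      exact ⟨i, by simp [hA, hi]⟩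
    set t : ↥S → ℝ := fun i => b.coord i v / (b.coord i v - b.coord i x) with ht
    obtain ⟨i₀, hi₀A, hmin⟩ := A.exists_min_image t hAne
    have hi₀lt : b.coord i₀ x < b.coord i₀ v := by
      simpa [hA] using hi₀A
    have hden : (0:ℝ) < b.coord i₀ v - b.coord i₀ x := by linarith
    have ht1 : 1 ≤ t i₀ := by
      rw [ht]
      rw [le_div_iff₀ hden]
      have := hxc i₀
      linarith
    have ht0 : 0 < t i₀ := lt_of_lt_of_le one_pos ht1
    set τ := t i₀ with hτ
    set u : ↥S → ℝ := fun i => b.coord i v + τ * (b.coord i x - b.coord i v) with hu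
    have hu0 : ∀ i, 0 ≤ u i := by
      intro i
      by_cases hiA : i ∈ A
      · have hilt : b.coord i x < b.coord i v := by simpa [hA] using hiA
        have hdi : (0:ℝ) < b.coord i v - b.coord i x := by linarith
        have hτle : τ ≤ t i := hmin i hiA
        have h3 : τ * (b.coord i v - b.coord i x) ≤ t i * (b.coord i v - b.coord i x) :=
          mul_le_mul_of_nonneg_right hτle hdi.le
        rw [ht] at h3
        rw [div_mul_cancel₀ _ hdi.ne'] at h3
        simp only [hu]; nlinarith
      · have hile : b.coord i v ≤ b.coord i x := by
          by_contra h
          exact hiA (by simp [hA]; linarith)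
        have := hxc i
        simp only [hu]; nlinarith
    have hsum : ∑ i, u i = 1 := by
      simp only [hu]
      rw [Finset.sum_add_distrib, ← Finset.mul_sum, Finset.sum_sub_distrib,
        b.sum_coord_apply_eq_one, b.sum_coord_apply_eq_one]
      ring
    have hui₀ : u i₀ = 0 := by
      simp only [hu, hτ, ht]
      field_simp
      ring
    set y : EuclideanSpace ℝ (Fin d) := ∑ i, u i • b i with hy
    have hyval : y = (1 - τ) • v + τ • x := by
      have h1 : ∀ i : ↥S, u i • b i =
          (1 - τ) • (b.coord i v • b i) + τ • (b.coord i x • b i) := by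
        intro i
        rw [smul_smul, smul_smul, ← add_smul]
        congr 1
        simp only [hu]; ring
      rw [hy]
      calc ∑ i, u i • b i
          = ∑ i, ((1 - τ) • (b.coord i v • b i) + τ • (b.coord i x • b i)) :=
            Finset.sum_congr rfl fun i _ => h1 i
        _ = (1 - τ) • ∑ i, b.coord i v • b i + τ • ∑ i, b.coord i x • b i := by
            rw [Finset.sum_add_distrib, Finset.smul_sum, Finset.smul_sum]
        _ = (1 - τ) • v + τ • x := by
            rw [b.linear_combination_coord_eq_self v, b.linear_combination_coord_eq_self x]
    -- y belongs to hull of the facet opposite i₀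
    have hyconv : y ∈ convexHull ℝ
        ((S : Set (EuclideanSpace ℝ (Fin d))) \ {(i₀ : EuclideanSpace ℝ (Fin d))}) := by
      have hsum' : ∑ i ∈ Finset.univ.erase i₀, u i = 1 := by
        rw [Finset.sum_erase _ hui₀, hsum]
      have hval' : (Finset.univ.erase i₀).centerMass u (fun i : ↥S => b i) = y := by
        rw [Finset.centerMass_eq_of_sum_1 _ _ hsum', hy]
        rw [Finset.sum_erase]
        rw [hui₀, zero_smul]
      rw [← hval']
      apply Finset.centerMass_mem_convexHull
      · exact fun i _ => hu0 i
      · rw [hsum']; exact one_pos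
      · intro i hi
        refine ⟨i.2, ?_⟩
        simp only [Set.mem_singleton_iff]
        exact Subtype.coe_injective.ne (Finset.mem_erase.mp hi).1
    refine ⟨(i₀ : EuclideanSpace ℝ (Fin d)), i₀.2, ?_⟩
    have hx_eq : x = (1 - τ⁻¹) • v + τ⁻¹ • y := by
      rw [hyval, smul_add, smul_smul, smul_smul, inv_mul_cancel₀ ht0.ne', one_smul,
        ← add_assoc, ← add_smul]
      have h0 : (1 - τ⁻¹) + τ⁻¹ * (1 - τ) = 0 := by field_simp; ring
      rw [h0, zero_smul, zero_add]
    rw [hx_eq]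
    have hvmem : v ∈ convexHull ℝ (insert v
        ((S : Set (EuclideanSpace ℝ (Fin d))) \ {(i₀ : EuclideanSpace ℝ (Fin d))})) :=
      subset_convexHull ℝ _ (Set.mem_insert _ _)
    have hymem : y ∈ convexHull ℝ (insert v
        ((S : Set (EuclideanSpace ℝ (Fin d))) \ {(i₀ : EuclideanSpace ℝ (Fin d))})) :=
      convexHull_mono (Set.subset_insert _ _) hyconv
    have h1' : (0:ℝ) ≤ 1 - τ⁻¹ := by
      have : τ⁻¹ ≤ 1 := by
        rw [inv_le_one_iff₀]; right; exact ht1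
      linarith
    exact (convex_convexHull ℝ _) hvmem hymem h1' (by positivity) (by ring)
/-- The volume of the convex hull of an `n`-point set `C ⊆ ℝ^d` (with
`n ≥ d+1`) is at most `(n choose d)` times the volume of the largest simplex with
vertices in `C`. -/
theorem convexHull_volume_le_choose_mul_simplex (d n : ℕ) (hd : 1 ≤ d)
    (C : Finset (EuclideanSpace ℝ (Fin d))) (hcard : C.card = n) (hn : d + 1 ≤ n) :
    volume (convexHull ℝ (C : Set (EuclideanSpace ℝ (Fin d)))) ≤
      (n.choose d : ENNReal) *
        (C.powersetCard (d + 1)).sup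
          (fun S => volume (convexHull ℝ (S : Set (EuclideanSpace ℝ (Fin d))))) := by
  classical
  have hCne : C.Nonempty := Finset.card_pos.mp (by omega)
  obtain ⟨v, hv⟩ := hCne
  have herase_card : (C.erase v).card = n - 1 := by
    rw [Finset.card_erase_of_mem hv, hcard]
  -- the covering by cones from `v`
  have hcover : convexHull ℝ (C : Set (EuclideanSpace ℝ (Fin d))) ⊆
      ⋃ T ∈ (C.erase v).powersetCard d,
        convexHull ℝ ((insert v T : Finset _) : Set (EuclideanSpace ℝ (Fin d))) := by
    intro x hx
    rw [convexHull_eq_union] at hx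
    simp only [Set.mem_iUnion] at hx
    obtain ⟨S, hSC, hSai, hxS⟩ := hx
    have hcard_le : S.card ≤ d + 1 := by
      have h := hSai.card_le_finrank_succ
      rw [Fintype.card_coe] at h
      have h2 : Module.finrank ℝ
          ↥(vectorSpan ℝ (Set.range ((↑) : ↥S → EuclideanSpace ℝ (Fin d)))) ≤ d := by
        have h3 := Submodule.finrank_le
          (vectorSpan ℝ (Set.range ((↑) : ↥S → EuclideanSpace ℝ (Fin d))))
        simpa [finrank_euclideanSpace_fin] using h3
      omega
    -- reduce to: an `S₀ ⊆ C` with at most `d` elements and `x ∈ conv (insert v S₀)`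
    obtain ⟨S₀, hS₀C, hS₀card, hxS₀⟩ :
        ∃ S₀ : Finset (EuclideanSpace ℝ (Fin d)),
          (S₀ : Set (EuclideanSpace ℝ (Fin d))) ⊆ (C : Set (EuclideanSpace ℝ (Fin d))) ∧ S₀.card ≤ d ∧
          x ∈ convexHull ℝ (insert v (S₀ : Set (EuclideanSpace ℝ (Fin d)))) := by
      rcases eq_or_lt_of_le hcard_le with hS1 | hS2
      · obtain ⟨w, hwS, hxw⟩ := cone_cover S hSai hS1 v hxS
        refine ⟨S.erase w, ?_, ?_, ?_⟩
        · intro z hz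
          exact hSC (Finset.mem_coe.mpr (Finset.erase_subset w S (Finset.mem_coe.mp hz)))
        · rw [Finset.card_erase_of_mem hwS, hS1]; omega
        · rwa [Finset.coe_erase]
      · exact ⟨S, hSC, by omega, convexHull_mono (Set.subset_insert _ _) hxS⟩
    -- extend `S₀.erase v` to a subset `T ⊆ C.erase v` of size exactly `d`
    have hS₀C' : S₀ ⊆ C := by
      intro z hz; exact_mod_cast hS₀C hz
    have hT₀sub : S₀.erase v ⊆ C.erase v := Finset.erase_subset_erase v hS₀C'
    have hT₀card : (S₀.erase v).card ≤ d :=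
      le_trans (Finset.card_erase_le) hS₀card
    obtain ⟨T, hT₀T, hTsub, hTcard⟩ :=
      Finset.exists_subsuperset_card_eq hT₀sub hT₀card (by omega)
    have hsubset : insert v (S₀ : Set (EuclideanSpace ℝ (Fin d))) ⊆
        ((insert v T : Finset _) : Set (EuclideanSpace ℝ (Fin d))) := by
      rw [Finset.coe_insert]
      intro z hz
      rcases hz with rfl | hz
      · exact Set.mem_insert _ _
      · rcases eq_or_ne z v with rfl | hzv
        · exact Set.mem_insert _ _
        · refine Set.mem_insert_iff.mpr (Or.inr ?_)
          exact_mod_cast hT₀T (Finset.mem_erase.mpr ⟨hzv, by exact_mod_cast hz⟩)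
    refine Set.mem_biUnion ?_ (convexHull_mono hsubset hxS₀)
    exact Finset.mem_powersetCard.mpr ⟨hTsub, hTcard⟩
  -- volume estimate
  calc volume (convexHull ℝ (C : Set (EuclideanSpace ℝ (Fin d))))
      ≤ volume (⋃ T ∈ (C.erase v).powersetCard d,
          convexHull ℝ ((insert v T : Finset _) : Set (EuclideanSpace ℝ (Fin d)))) :=
        measure_mono hcover
    _ ≤ ∑ T ∈ (C.erase v).powersetCard d,
          volume (convexHull ℝ ((insert v T : Finset _) : Set (EuclideanSpace ℝ (Fin d)))) :=
        measure_biUnion_finset_le _ _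
    _ ≤ ((C.erase v).powersetCard d).card •
          (C.powersetCard (d + 1)).sup
            (fun S => volume (convexHull ℝ (S : Set (EuclideanSpace ℝ (Fin d))))) := by
        apply Finset.sum_le_card_nsmul
        intro T hT
        rw [Finset.mem_powersetCard] at hT
        have hvT : v ∉ T := fun h => (Finset.mem_erase.mp (hT.1 h)).1 rfl
        have hmem : insert v T ∈ C.powersetCard (d + 1) := by
          rw [Finset.mem_powersetCard]
          constructor
          · exact Finset.insert_subset hv (hT.1.trans (Finset.erase_subset _ _))
          · rw [Finset.card_insert_of_notMem hvT, hT.2]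
        exact Finset.le_sup
          (f := fun S : Finset (EuclideanSpace ℝ (Fin d)) =>
            volume (convexHull ℝ (S : Set (EuclideanSpace ℝ (Fin d))))) hmem
    _ ≤ (n.choose d : ENNReal) *
          (C.powersetCard (d + 1)).sup
            (fun S => volume (convexHull ℝ (S : Set (EuclideanSpace ℝ (Fin d))))) := by
        rw [nsmul_eq_mul, Finset.card_powersetCard, herase_card]
        apply mul_le_mul_left
        exact_mod_cast Nat.cast_le.mpr (Nat.choose_le_choose d (by omega : n - 1 ≤ n))
end

section
/- For all integers d ≥ 1 and n ≥ 1 with n > 24·d·log₂(d+1), one has (e²/(e²−1))^(n−d−1) > binom(n, d). -/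
open Real

set_option maxHeartbeats 1000000

lemma lem_exp_small : Real.exp (1442/10000) < 1.1565 := by
  have h := Real.exp_bound' (x := 1442/10000) (by norm_num) (by norm_num) (n := 3) (by norm_num)
  calc Real.exp (1442/10000) ≤ _ := h
    _ < 1.1565 := by
      simp [Finset.sum_range_succ, Nat.factorial]
      norm_num

lemma lem_log_c : (1442/10000 : ℝ) < Real.log (Real.exp 1 ^ 2 / (Real.exp 1 ^ 2 - 1)) := by
  have h1 : Real.exp 1 < 2.7182818286 := Real.exp_one_lt_d9
  have h0 : (2.7182818283 : ℝ) < Real.exp 1 := Real.exp_one_gt_d9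
  have hsq' : (7 : ℝ) < Real.exp 1 ^ 2 := by nlinarith
  have hc : (1.1565 : ℝ) < Real.exp 1 ^ 2 / (Real.exp 1 ^ 2 - 1) := by
    rw [lt_div_iff₀ (by linarith)]
    nlinarith
  have h2 : Real.exp (1442/10000) < Real.exp 1 ^ 2 / (Real.exp 1 ^ 2 - 1) :=
    lt_trans lem_exp_small hc
  rwa [← Real.lt_log_iff_exp_lt (by nlinarith [Real.exp_pos (1442/10000 : ℝ)])] at h2

lemma log_tangent {m x : ℝ} (hm : 0 < m) (hx : 0 < x) :
    Real.log x ≤ Real.log m + (x - m) / m := by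
  have h := Real.log_le_sub_one_of_pos (show (0:ℝ) < x / m by positivity)
  rw [Real.log_div (ne_of_gt hx) (ne_of_gt hm)] at h
  have he : (x - m) / m = x / m - 1 := by field_simp
  linarith [he]

lemma lem_key (d n : ℕ) (hd : 1 ≤ d)
    (h : (24 : ℝ) * d * Real.logb 2 (d + 1) < n) :
    (d : ℝ) * Real.log n < (1442/10000) * ((n : ℝ) - d - 1) := by
  have hl2a : (0.6931471803 : ℝ) < Real.log 2 := Real.log_two_gt_d9
  have hl2b : Real.log 2 < 0.6931471808 := Real.log_two_lt_d9
  have hlog25 : Real.log 25 ≤ (14/3) * Real.log 2 := by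
    have h3 : Real.log ((25:ℝ)^3) ≤ Real.log ((2:ℝ)^14) :=
      Real.log_le_log (by norm_num) (by norm_num)
    rw [Real.log_pow, Real.log_pow] at h3
    push_cast at h3
    linarith
  rcases eq_or_lt_of_le hd with hd1 | hd2
  · -- d = 1
    subst hd1
    have ht : Real.logb 2 ((1:ℕ) + 1 : ℝ) = 1 := by
      norm_num
    rw [ht] at h
    have hn25 : (25 : ℝ) ≤ n := by
      have : (24 : ℝ) < n := by push_cast at h ⊢; linarith
      have : 24 < n := by exact_mod_cast this
      exact_mod_cast this
    have htan := log_tangent (show (0:ℝ) < 25 by norm_num) (show (0:ℝ) < n by linarith)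
    have he : ((n:ℝ) - 25) / 25 = (n:ℝ)/25 - 1 := by field_simp
    push_cast
    linarith
  · -- d ≥ 2
    set t := Real.logb 2 ((d:ℝ) + 1) with htdef
    have hD2 : (2 : ℝ) ≤ d := by exact_mod_cast hd2
    have hl2pos : (0:ℝ) < Real.log 2 := by linarith
    have ht2 : t * Real.log 2 = Real.log ((d:ℝ) + 1) := by
      rw [htdef, Real.logb]
      field_simp
    have hlog3ub : Real.log 3 ≤ (5/3) * Real.log 2 := by
      have h3 : Real.log ((3:ℝ)^12) ≤ Real.log ((2:ℝ)^20) :=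
        Real.log_le_log (by norm_num) (by norm_num)
      rw [Real.log_pow, Real.log_pow] at h3
      push_cast at h3
      linarith
    have hlog3lb : (19/12 : ℝ) * Real.log 2 ≤ Real.log 3 := by
      have h3 : Real.log ((2:ℝ)^19) ≤ Real.log ((3:ℝ)^12) :=
        Real.log_le_log (by norm_num) (by norm_num)
      rw [Real.log_pow, Real.log_pow] at h3
      push_cast at h3
      linarith
    have ht19 : (19/12 : ℝ) ≤ t := by
      have h3 : Real.log 3 ≤ Real.log ((d:ℝ) + 1) :=
        Real.log_le_log (by norm_num) (by push_cast; linarith)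
      have : (19/12 : ℝ) * Real.log 2 ≤ t * Real.log 2 := by
        rw [ht2]; linarith
      exact le_of_mul_le_mul_right this hl2pos
    have htpos : (0:ℝ) < t := by linarith
    have hdpos : (0:ℝ) < d := by linarith
    have hlogd : Real.log d ≤ t * Real.log 2 := by
      rw [ht2]
      exact Real.log_le_log hdpos (by linarith)
    have hlogt : Real.log t ≤ t - 1 := Real.log_le_sub_one_of_pos htpos
    have hlog24 : Real.log 24 ≤ 3 * Real.log 2 + Real.log 3 := by
      have h24 : (24:ℝ) = 2^3 * 3 := by norm_num
      rw [h24, Real.log_mul (by norm_num) (by norm_num), Real.log_pow]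
      push_cast
      linarith
    have hmpos : (0:ℝ) < 24 * d * t := by positivity
    have hnpos : (0:ℝ) < n := lt_trans hmpos h
    have htan := log_tangent hmpos hnpos
    have hlogm : Real.log (24 * d * t) = Real.log 24 + Real.log d + Real.log t := by
      rw [Real.log_mul (by positivity) (ne_of_gt htpos),
          Real.log_mul (by norm_num) (ne_of_gt hdpos)]
    -- product bound for t * log 2
    have htl2 : t * Real.log 2 ≤ 0.6931471808 * t := by
      nlinarith
    -- scalar inequality
    have hscalar : Real.log 24 + Real.log d + Real.log t ≤ (1442/10000) * (24 * t - 3/2) := by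
      nlinarith
    -- multiply by d
    have hmul : (d:ℝ) * (Real.log 24 + Real.log d + Real.log t) ≤
        (1442/10000) * (24 * d * t - (3/2) * d) := by
      nlinarith
    -- the division piece
    have hX : (0:ℝ) < (n:ℝ) - 24 * d * t := by linarith
    have hdiv : (d:ℝ) * (((n:ℝ) - 24 * d * t) / (24 * d * t)) =
        ((n:ℝ) - 24 * d * t) / (24 * t) := by
      field_simp
    have hdiv2 : ((n:ℝ) - 24 * d * t) / (24 * t) < (1442/10000) * ((n:ℝ) - 24 * d * t) := by
      rw [div_lt_iff₀ (by linarith)]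
      nlinarith [mul_nonneg (le_of_lt hX) (show (0:ℝ) ≤ 24 * t - 38 by linarith)]
    have hmain : (d:ℝ) * Real.log n ≤
        (d:ℝ) * Real.log (24 * d * t) + (d:ℝ) * (((n:ℝ) - 24 * d * t) / (24 * d * t)) := by
      nlinarith [mul_le_mul_of_nonneg_left htan (le_of_lt hdpos)]
    rw [hlogm] at hmain
    rw [hdiv] at hmain
    -- combine: d·1.5 ≥ d + 1
    nlinarith

/-- For integers `d ≥ 1` and `n ≥ 1` with `n > 24·d·log₂(d+1)`, one has
`(e²/(e²−1))^(n−d−1) > (n choose d)`. -/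
theorem counting_inequality (d n : ℕ) (hd : 1 ≤ d) (hn : 1 ≤ n)
    (h : (24 : ℝ) * d * Real.logb 2 (d + 1) < n) :
    (n.choose d : ℝ) < (Real.exp 1 ^ 2 / (Real.exp 1 ^ 2 - 1)) ^ (n - d - 1) := by
  have hE : (1:ℝ) < Real.exp 1 ^ 2 := by nlinarith [Real.exp_one_gt_d9]
  set c : ℝ := Real.exp 1 ^ 2 / (Real.exp 1 ^ 2 - 1) with hc
  have hcpos : 0 < c := div_pos (by positivity) (by linarith)
  -- t ≥ 1
  have ht1 : (1:ℝ) ≤ Real.logb 2 ((d:ℝ) + 1) := by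
    have h2 : Real.log 2 ≤ Real.log ((d:ℝ) + 1) := by
      apply Real.log_le_log (by norm_num)
      have : (1:ℝ) ≤ d := by exact_mod_cast hd
      linarith
    rw [Real.logb, le_div_iff₀ (Real.log_pos (by norm_num))]
    linarith
  -- n ≥ d + 2
  have hDpos : (1:ℝ) ≤ d := by exact_mod_cast hd
  have hnd : d + 2 ≤ n := by
    have h24 : (24:ℝ) * d ≤ 24 * d * Real.logb 2 ((d:ℝ) + 1) := by nlinarith
    have h2 : ((d:ℝ) + 2) < n := by nlinarith
    have h3 : d + 2 < n := by exact_mod_cast h2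
    omega
  have hcast : ((n - d - 1 : ℕ) : ℝ) = (n:ℝ) - d - 1 := by
    rw [Nat.cast_sub (by omega : 1 ≤ n - d), Nat.cast_sub (by omega : d ≤ n)]
    push_cast
    ring
  -- binomial ≤ n^d
  have hchoose : (n.choose d : ℝ) ≤ (n:ℝ) ^ d := by
    exact_mod_cast Nat.cast_le.mpr (Nat.choose_le_pow n d)
  -- key log inequality
  have hkey := lem_key d n hd h
  have hN1 : (1:ℝ) ≤ (n:ℝ) - d - 1 := by
    have : ((d:ℝ) + 2) ≤ n := by exact_mod_cast hnd
    linarith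
  have hlc := lem_log_c
  have hnR : (0:ℝ) < n := by positivity
  have hpow : ((n:ℝ)) ^ d < c ^ (n - d - 1) := by
    have e1 : ((n:ℝ)) ^ d = Real.exp (d * Real.log n) := by
      rw [← Real.rpow_natCast (n:ℝ) d, Real.rpow_def_of_pos hnR, mul_comm]
    have e2 : c ^ (n - d - 1) = Real.exp (((n - d - 1 : ℕ) : ℝ) * Real.log c) := by
      rw [← Real.rpow_natCast c (n - d - 1), Real.rpow_def_of_pos hcpos, mul_comm]
    rw [e1, e2, Real.exp_lt_exp, hcast]
    calc (d:ℝ) * Real.log n < (1442/10000) * ((n:ℝ) - d - 1) := hkey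
      _ ≤ ((n:ℝ) - d - 1) * Real.log c := by nlinarith
  calc (n.choose d : ℝ) ≤ (n:ℝ) ^ d := hchoose
    _ < c ^ (n - d - 1) := hpow
end

section
/- Let d ≥ 1 be an integer, γ > 0 a real number, and ℓ : ℝ^d → ℝ an affine function. Let x₁, …, xₙ ∈ ℝ^d satisfy ℓ(xᵢ) ≥ γ for all i and |ℓ(xᵢ) − ℓ(xⱼ)| ≤ γ/d for all i, j. If y = Σᵢ aᵢ·xᵢ for real coefficients aᵢ with Σᵢ aᵢ = 1 and Σᵢ |aᵢ| ≤ d+1, then ℓ(y) ≥ γ/2. -/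
/-- A `γ/d`-cluster with margin `γ` (under an affine function `ℓ`) determines
the sign of any affine combination of its points with coefficient ℓ¹-norm at most `d+1`:
such a combination `y` satisfies `ℓ(y) ≥ γ/2`. -/
theorem cluster_sign_transfer (d n : ℕ) (hd : 1 ≤ d) (γ : ℝ) (hγ : 0 < γ)
    (ℓ : EuclideanSpace ℝ (Fin d) →ᵃ[ℝ] ℝ) (x : Fin n → EuclideanSpace ℝ (Fin d))
    (hmargin : ∀ i, γ ≤ ℓ (x i))
    (hcluster : ∀ i j, |ℓ (x i) - ℓ (x j)| ≤ γ / d)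
    (a : Fin n → ℝ) (y : EuclideanSpace ℝ (Fin d))
    (hy : y = ∑ i, a i • x i) (ha1 : ∑ i, a i = 1) (ha2 : ∑ i, |a i| ≤ (d : ℝ) + 1) :
    γ / 2 ≤ ℓ y := by
  have hdpos : (0 : ℝ) < d := by exact_mod_cast hd
  -- ℓ of the affine combination is the affine combination of values
  have key : ℓ y = ∑ i, a i * ℓ (x i) := by
    rw [hy, ← Finset.univ.affineCombination_eq_linear_combination x a ha1,
      Finset.univ.map_affineCombination x a ha1 ℓ,
      Finset.univ.affineCombination_eq_linear_combination (ℓ ∘ x) a ha1]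
    simp [smul_eq_mul]
  -- n is nonempty
  have hn : Nonempty (Fin n) := by
    rcases Nat.eq_zero_or_pos n with h | h
    · subst h; simp at ha1
    · exact ⟨⟨0, h⟩⟩
  -- minimizer of ℓ (x i)
  obtain ⟨i0, -, hi0⟩ := Finset.exists_min_image Finset.univ (fun i => ℓ (x i))
    (Finset.univ_nonempty)
  set m := ℓ (x i0) with hm
  have hmγ : γ ≤ m := hmargin i0
  -- termwise lower bound
  have hterm : ∀ i, a i * m + min (a i) 0 * (γ / d) ≤ a i * ℓ (x i) := by
    intro i
    rcases le_or_gt 0 (a i) with hai | hai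
    · have h1 : min (a i) 0 * (γ / d) ≤ 0 :=
        mul_nonpos_of_nonpos_of_nonneg (min_le_right _ _)
          (le_of_lt (div_pos hγ hdpos))
      have h2 : a i * m ≤ a i * ℓ (x i) :=
        mul_le_mul_of_nonneg_left (hi0 i (Finset.mem_univ i)) hai
      linarith
    · have hub : ℓ (x i) ≤ m + γ / d := by
        have := hcluster i i0
        rw [abs_le] at this
        linarith [this.2]
      have hmin : min (a i) 0 = a i := min_eq_left hai.le
      have : a i * (m + γ / d) ≤ a i * ℓ (x i) :=
        mul_le_mul_of_nonpos_left hub hai.le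
      rw [hmin]; nlinarith
  have hsum : ∑ i, (a i * m + min (a i) 0 * (γ / d)) ≤ ∑ i, a i * ℓ (x i) :=
    Finset.sum_le_sum fun i _ => hterm i
  have hminsum : -(d / 2 : ℝ) ≤ ∑ i, min (a i) 0 := by
    have : ∀ i, min (a i) 0 = (a i - |a i|) / 2 := by
      intro i; rcases le_or_gt 0 (a i) with h | h
      · rw [min_eq_right h, abs_of_nonneg h]; ring
      · rw [min_eq_left h.le, abs_of_neg h]; ring
    calc -(d / 2 : ℝ) ≤ (∑ i, a i - ∑ i, |a i|) / 2 := by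
            rw [ha1]; linarith
      _ = ∑ i, (a i - |a i|) / 2 := by rw [← Finset.sum_sub_distrib, Finset.sum_div]
      _ = ∑ i, min (a i) 0 := by simp_rw [this]
  have hexp : ∑ i, (a i * m + min (a i) 0 * (γ / d))
      = m + (∑ i, min (a i) 0) * (γ / d) := by
    rw [Finset.sum_add_distrib, ← Finset.sum_mul, ← Finset.sum_mul, ha1, one_mul]
  rw [key]
  have hfinal : m + (∑ i, min (a i) 0) * (γ / d) ≥ γ / 2 := by
    have h1 : (∑ i, min (a i) 0) * (γ / d) ≥ -(d / 2) * (γ / d) :=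
      mul_le_mul_of_nonneg_right hminsum (le_of_lt (div_pos hγ hdpos))
    have h2 : -(d / 2 : ℝ) * (γ / d) = -(γ / 2) := by field_simp
    rw [h2] at h1; linarith
  linarith [hsum, hexp ▸ hsum, hfinal]
end

section
/- Let n ≥ 1, d ≥ 1 be integers, let x₁, …, xₙ ∈ ℝ^d, let y ∈ ℝ^d, and let κ ≥ 1 be a real number. Then there exists a ∈ ℝⁿ with Σᵢ aᵢ = 1, Σᵢ aᵢ·xᵢ = y, and Σᵢ |aᵢ| ≤ κ if and only if every affine function L : ℝ^d → ℝ satisfies L(y) ≤ ((κ+1)/2)·maxᵢ L(xᵢ) − ((κ−1)/2)·minᵢ L(xᵢ). -/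
open Finset

section Aux

variable {n d : ℕ}

/-- Evaluation of a continuous linear functional on `ℝ × EuclideanSpace ℝ (Fin d)`
at `(1, z)`, as an affine map in `z`. -/
noncomputable def auxAffineOfCLM (f : (ℝ × EuclideanSpace ℝ (Fin d)) →L[ℝ] ℝ) :
    EuclideanSpace ℝ (Fin d) →ᵃ[ℝ] ℝ where
  toFun z := f (1, z)
  linear := (f.toLinearMap).comp (LinearMap.inr ℝ ℝ _)
  map_vadd' p v := by
    simp only [LinearMap.comp_apply, LinearMap.inr_apply, ContinuousLinearMap.coe_coe,
      vadd_eq_add]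
    rw [← map_add]
    congr 1
    simp [Prod.ext_iff]

@[simp] lemma auxAffineOfCLM_apply (f : (ℝ × EuclideanSpace ℝ (Fin d)) →L[ℝ] ℝ)
    (z : EuclideanSpace ℝ (Fin d)) : auxAffineOfCLM f z = f (1, z) := rfl

end Aux

set_option maxHeartbeats 1000000 in
/-- `y` is an affine combination of `x₁,…,xₙ` with coefficient ℓ¹-norm at most
`κ` if and only if every affine functional `L` satisfies
`L(y) ≤ ((κ+1)/2)·maxᵢ L(xᵢ) − ((κ−1)/2)·minᵢ L(xᵢ)`. -/
theorem affine_combination_iff_affine_functionals (n d : ℕ) (hn : 1 ≤ n) (hd : 1 ≤ d)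
    (x : Fin n → EuclideanSpace ℝ (Fin d)) (y : EuclideanSpace ℝ (Fin d))
    (κ : ℝ) (hκ : 1 ≤ κ) :
    (∃ a : Fin n → ℝ,
        (∑ i, a i = 1) ∧ (∑ i, a i • x i = y) ∧ (∑ i, |a i| ≤ κ)) ↔
      (∀ L : EuclideanSpace ℝ (Fin d) →ᵃ[ℝ] ℝ,
        L y ≤ (κ + 1) / 2 *
            Finset.univ.sup' (Finset.univ_nonempty_iff.mpr (Fin.pos_iff_nonempty.mp hn))
              (fun i => L (x i)) -
          (κ - 1) / 2 *
            Finset.univ.inf' (Finset.univ_nonempty_iff.mpr (Fin.pos_iff_nonempty.mp hn))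
              (fun i => L (x i))) := by
  classical
  have hne : (Finset.univ : Finset (Fin n)).Nonempty :=
    Finset.univ_nonempty_iff.mpr (Fin.pos_iff_nonempty.mp hn)
  have hκ0 : (0:ℝ) < κ := lt_of_lt_of_le one_pos hκ
  constructor
  · rintro ⟨a, ha1, hax, haκ⟩ L
    set M := Finset.univ.sup' hne (fun i => L (x i)) with hMdef
    set m := Finset.univ.inf' hne (fun i => L (x i)) with hmdef
    have hle : ∀ i, L (x i) ≤ M := fun i => by
      rw [hMdef]; exact Finset.le_sup' (fun j => L (x j)) (Finset.mem_univ i)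
    have hge : ∀ i, m ≤ L (x i) := fun i => by
      rw [hmdef]; exact Finset.inf'_le (fun j => L (x j)) (Finset.mem_univ i)
    have hmM : m ≤ M := le_trans (hge ⟨0, hn⟩) (hle ⟨0, hn⟩)
    have hdec : ∀ z, L z = L.linear z + L 0 := fun z => congrFun (AffineMap.decomp L) z
    have hLy : L y = ∑ i, a i * L (x i) := by
      calc L y = L.linear y + L 0 := hdec y
        _ = L.linear (∑ i, a i • x i) + L 0 := by rw [hax]
        _ = (∑ i, a i * L.linear (x i)) + (∑ i, a i) * L 0 := by
            rw [map_sum, ha1, one_mul]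
            simp [smul_eq_mul]
        _ = ∑ i, a i * (L.linear (x i) + L 0) := by
            rw [Finset.sum_mul, ← Finset.sum_add_distrib]
            exact Finset.sum_congr rfl fun i _ => by ring
        _ = ∑ i, a i * L (x i) := Finset.sum_congr rfl fun i _ => by rw [← hdec (x i)]
    have hterm : ∀ i, a i * L (x i) ≤ (|a i| + a i) / 2 * M - (|a i| - a i) / 2 * m := by
      intro i
      have h1 : (0:ℝ) ≤ (|a i| + a i) / 2 := by
        have := neg_abs_le (a i); linarith
      have h2 : (0:ℝ) ≤ (|a i| - a i) / 2 := by
        have := le_abs_self (a i); linarith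
      nlinarith [mul_nonneg h1 (sub_nonneg.2 (hle i)), mul_nonneg h2 (sub_nonneg.2 (hge i))]
    have hsum : L y ≤ (∑ i, |a i| + 1) / 2 * M - (∑ i, |a i| - 1) / 2 * m := by
      rw [hLy]
      calc ∑ i, a i * L (x i) ≤ ∑ i, ((|a i| + a i) / 2 * M - (|a i| - a i) / 2 * m) :=
            Finset.sum_le_sum fun i _ => hterm i
        _ = (∑ i, (|a i| + a i)) / 2 * M - (∑ i, (|a i| - a i)) / 2 * m := by
            rw [Finset.sum_sub_distrib, ← Finset.sum_mul, ← Finset.sum_mul,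
              ← Finset.sum_div, ← Finset.sum_div]
        _ = (∑ i, |a i| + 1) / 2 * M - (∑ i, |a i| - 1) / 2 * m := by
            rw [Finset.sum_add_distrib, Finset.sum_sub_distrib, ha1]
    refine le_trans hsum ?_
    nlinarith [mul_nonneg (sub_nonneg.2 haκ) (sub_nonneg.2 hmM)]
  · intro hL
    by_contra hno
    set g : Fin n × Bool → ℝ × EuclideanSpace ℝ (Fin d) :=
      fun p => (if p.2 then κ else -κ) • ((1 : ℝ), x p.1) with hg
    have hiftrue : ∀ i : Fin n, g (i, true) = κ • ((1:ℝ), x i) := fun i => by simp [hg]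
    have hiffalse : ∀ i : Fin n, g (i, false) = (-κ) • ((1:ℝ), x i) := fun i => by simp [hg]
    have hmem : ((1 : ℝ), y) ∉ convexHull ℝ (Set.range g) := by
      intro hmemK
      rw [convexHull_range_eq_exists_affineCombination] at hmemK
      obtain ⟨s, w, hw0, hw1, hwc⟩ := hmemK
      rw [Finset.affineCombination_eq_linear_combination _ _ _ hw1] at hwc
      set W : Fin n × Bool → ℝ := fun p => if p ∈ s then w p else 0 with hW
      have hW0 : ∀ p, 0 ≤ W p := by
        intro p; by_cases hp : p ∈ s
        · simp only [hW, hp, if_true]; exact hw0 p hp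
        · simp [hW, hp]
      have hW1 : ∑ p, W p = 1 := by
        rw [← hw1]
        rw [show s.sum w = ∑ p ∈ s, W p from
          Finset.sum_congr rfl fun p hp => by simp [hW, hp]]
        exact (Finset.sum_subset (Finset.subset_univ s)
          (fun p _ hp => by simp [hW, hp])).symm
      have hWc : ∑ p, W p • g p = ((1 : ℝ), y) := by
        rw [← hwc]
        rw [show ∑ p ∈ s, w p • g p = ∑ p ∈ s, W p • g p from
          Finset.sum_congr rfl fun p hp => by simp [hW, hp]]
        exact (Finset.sum_subset (Finset.subset_univ s)
          (fun p _ hp => by simp [hW, hp])).symm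
      have hcoef : ∀ p : Fin n × Bool, W p • g p
          = ((W p * (if p.2 then κ else -κ)),
             (W p * (if p.2 then κ else -κ)) • x p.1) := by
        rintro ⟨i, b⟩
        cases b <;>
          simp [hg, Prod.smul_def, smul_smul, smul_eq_mul, mul_neg, neg_smul]
      have hfst : ∑ p : Fin n × Bool, W p * (if p.2 then κ else -κ) = 1 := by
        have h1 : (∑ p, W p • g p).1 = (1:ℝ) := by rw [hWc]
        rw [← h1, show (∑ p, W p • g p).1 = ∑ p, (W p • g p).1 from
          map_sum (AddMonoidHom.fst ℝ (EuclideanSpace ℝ (Fin d))) _ _]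
        exact Finset.sum_congr rfl fun p _ => by rw [hcoef p]
      have hsnd : ∑ p : Fin n × Bool, (W p * (if p.2 then κ else -κ)) • x p.1 = y := by
        have h2 : (∑ p, W p • g p).2 = y := by rw [hWc]
        rw [← h2, show (∑ p, W p • g p).2 = ∑ p, (W p • g p).2 from
          map_sum (AddMonoidHom.snd ℝ (EuclideanSpace ℝ (Fin d))) _ _]
        exact (Finset.sum_congr rfl fun p _ => by rw [hcoef p]).symm
      refine hno ⟨fun i => κ * (W (i, true) - W (i, false)), ?_, ?_, ?_⟩
      · rw [← hfst, Fintype.sum_prod_type]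
        refine Finset.sum_congr rfl fun i _ => ?_
        rw [Fintype.sum_bool]
        simp only [if_true, Bool.false_eq_true, if_false]
        ring
      · rw [← hsnd, Fintype.sum_prod_type]
        refine Finset.sum_congr rfl fun i _ => ?_
        rw [Fintype.sum_bool]
        simp only [if_true, Bool.false_eq_true, if_false]
        rw [← add_smul]
        congr 1
        ring
      · calc ∑ i, |κ * (W (i, true) - W (i, false))|
            ≤ ∑ i, (κ * W (i, true) + κ * W (i, false)) := by
              refine Finset.sum_le_sum fun i _ => ?_
              have h1 := hW0 (i, true); have h2 := hW0 (i, false)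
              have habs : |W (i, true) - W (i, false)| ≤ W (i, true) + W (i, false) :=
                abs_sub_le_iff.mpr ⟨by linarith, by linarith⟩
              rw [abs_mul, abs_of_pos hκ0]
              nlinarith [mul_le_mul_of_nonneg_left habs hκ0.le]
          _ = κ := by
              have : ∑ i, (κ * W (i, true) + κ * W (i, false)) = κ * ∑ p, W p := by
                rw [Fintype.sum_prod_type, Finset.mul_sum]
                exact Finset.sum_congr rfl fun i _ => by rw [Fintype.sum_bool, mul_add]
              rw [this, hW1, mul_one]
    have hKclosed : IsClosed (convexHull ℝ (Set.range g)) :=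
      (Set.finite_range g).isClosed_convexHull (𝕜 := ℝ)
    obtain ⟨f, u, hfu, hufy⟩ :=
      geometric_hahn_banach_closed_point (convex_convexHull ℝ _) hKclosed hmem
    set L := auxAffineOfCLM f with hLdef
    have hLyf : L y = f (1, y) := rfl
    have hpos : ∀ i, κ * L (x i) < L y ∧ -(κ * L (x i)) < L y := by
      intro i
      have hLx : L (x i) = f (1, x i) := rfl
      constructor
      · have h1 : f (g (i, true)) < u := hfu _ (subset_convexHull ℝ _ ⟨(i, true), rfl⟩)
        rw [hiftrue i, map_smul, smul_eq_mul] at h1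
        rw [hLx, hLyf]; linarith
      · have h1 : f (g (i, false)) < u := hfu _ (subset_convexHull ℝ _ ⟨(i, false), rfl⟩)
        rw [hiffalse i, map_smul, smul_eq_mul] at h1
        rw [hLx, hLyf]; nlinarith
    obtain ⟨iM, -, hiM⟩ := Finset.exists_mem_eq_sup'
      (Finset.univ_nonempty_iff.mpr (Fin.pos_iff_nonempty.mp hn)) (fun i => L (x i))
    obtain ⟨im, -, him⟩ := Finset.exists_mem_eq_inf'
      (Finset.univ_nonempty_iff.mpr (Fin.pos_iff_nonempty.mp hn)) (fun i => L (x i))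
    have hLle := hL L
    rw [hiM, him] at hLle
    have hM := (hpos iM).1
    have hm := (hpos im).2
    nlinarith [mul_pos (show (0:ℝ) < κ + 1 by linarith) (sub_pos.2 hM),
      mul_nonneg (show (0:ℝ) ≤ κ - 1 by linarith) (le_of_lt (sub_pos.2 hm))]
end

section
/- Let b ≥ 48 be an even integer, let Z₁, …, Z_b be i.i.d. random variables each uniformly distributed on {1, …, b}, let B ⊆ {1, …, b} be a subset with |B| = b/2, and let Y be the number of indices i ∈ B such that Zⱼ ≠ i for every j ∈ {1, …, b}. Then Var(Y) ≤ b²/64. -/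
open MeasureTheory ProbabilityTheory

/-- Throwing `b ≥ 48` points i.i.d. uniformly into `b` blocks, the variance of
the number of empty blocks among a designated half `B` is at most `b²/64`. -/
theorem slotting_variance {Ω : Type*} [MeasurableSpace Ω] (μ : Measure Ω)
    [IsProbabilityMeasure μ] (b : ℕ) (hb : 48 ≤ b) (hbe : Even b)
    (Z : Fin b → Ω → Fin b) (hmeas : ∀ j, Measurable (Z j))
    (hunif : ∀ j i, μ (Z j ⁻¹' {i}) = (b : ENNReal)⁻¹)
    (hindep : iIndepFun Z μ)
    (B : Finset (Fin b)) (hB : B.card = b / 2) :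
    variance (fun ω => (((B.filter (fun i => ∀ j, Z j ω ≠ i)).card : ℝ))) μ ≤
      (b : ℝ) ^ 2 / 64 := by
  classical
  have hb2 : (2 : ℕ) ≤ b := by omega
  have hbR : (48 : ℝ) ≤ (b : ℝ) := by exact_mod_cast hb
  -- The empty-block events
  set A : Fin b → Set Ω := fun i => ⋂ j, (Z j ⁻¹' {i})ᶜ with hAdef
  have hA : ∀ i, MeasurableSet (A i) := fun i =>
    MeasurableSet.iInter fun j => (hmeas j (measurableSet_singleton i)).compl
  -- single-coordinate probabilities
  have hone : ∀ j (i : Fin b), μ ((Z j ⁻¹' {i})ᶜ) = 1 - (b : ENNReal)⁻¹ := by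
    intro j i
    rw [measure_compl (hmeas j (measurableSet_singleton i)) (measure_ne_top μ _),
      measure_univ, hunif]
  have hAi : ∀ i, μ (A i) = (1 - (b : ENNReal)⁻¹) ^ b := by
    intro i
    have := hindep.meas_iInter (s := fun j => (Z j ⁻¹' {i})ᶜ)
      (fun j => ⟨({i} : Set (Fin b))ᶜ, (measurableSet_singleton i).compl, rfl⟩)
    rw [hAdef]
    simp only [this, hone, Finset.prod_const, Finset.card_univ, Fintype.card_fin]
  -- pairwise probabilities
  have hpair : ∀ i i' : Fin b, i ≠ i' →
      μ (A i ∩ A i') = (1 - 2 * (b : ENNReal)⁻¹) ^ b := by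
    intro i i' hne
    have hset : A i ∩ A i' = ⋂ j, Z j ⁻¹' (({i, i'} : Set (Fin b))ᶜ) := by
      rw [hAdef, ← Set.iInter_inter_distrib]
      refine Set.iInter_congr fun j => ?_
      ext ω
      simp [not_or]
    have htwo : ∀ j, μ (Z j ⁻¹' (({i, i'} : Set (Fin b))ᶜ)) = 1 - 2 * (b : ENNReal)⁻¹ := by
      intro j
      have hm : MeasurableSet (Z j ⁻¹' ({i, i'} : Set (Fin b))) :=
        hmeas j (by measurability)
      rw [Set.preimage_compl, measure_compl hm (measure_ne_top μ _), measure_univ]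
      congr 1
      have h1 : ({i, i'} : Set (Fin b)) = {i} ∪ {i'} := rfl
      have hdisj : Disjoint (Z j ⁻¹' ({i} : Set (Fin b))) (Z j ⁻¹' ({i'} : Set (Fin b))) :=
        (Set.disjoint_singleton.2 hne).preimage _
      rw [h1, Set.preimage_union,
        measure_union hdisj (hmeas j (measurableSet_singleton i')), hunif, hunif, two_mul]
    have := hindep.meas_iInter (s := fun j => Z j ⁻¹' (({i, i'} : Set (Fin b))ᶜ))
      (fun j => ⟨({i, i'} : Set (Fin b))ᶜ, (by measurability), rfl⟩)
    rw [hset, this]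
    simp only [htwo, Finset.prod_const, Finset.card_univ, Fintype.card_fin]
  -- real values
  set r : ℝ := 1 - (b : ℝ)⁻¹ with hrdef
  set s : ℝ := 1 - 2 * (b : ℝ)⁻¹ with hsdef
  have hble : (b : ENNReal)⁻¹ ≤ 1 := by
    simp only [ENNReal.inv_le_one]
    have h1 : (1 : ℕ) ≤ b := by omega
    exact_mod_cast h1
  have hble2 : 2 * (b : ENNReal)⁻¹ ≤ 1 := by
    have h1 : (b : ENNReal)⁻¹ ≤ (2 : ENNReal)⁻¹ := by
      rw [ENNReal.inv_le_inv]
      exact_mod_cast hb2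
    calc 2 * (b : ENNReal)⁻¹ ≤ 2 * (2 : ENNReal)⁻¹ := by
          exact mul_le_mul_right h1 2
      _ = 1 := ENNReal.mul_inv_cancel two_ne_zero ENNReal.ofNat_ne_top
  have hrval : ∀ i, (μ (A i)).toReal = r ^ b := by
    intro i
    rw [hAi i, ENNReal.toReal_pow, ENNReal.toReal_sub_of_le hble ENNReal.one_ne_top]
    simp [hrdef]
  have hsval : ∀ i i' : Fin b, i ≠ i' → (μ (A i ∩ A i')).toReal = s ^ b := by
    intro i i' hne
    rw [hpair i i' hne, ENNReal.toReal_pow, ENNReal.toReal_sub_of_le hble2 ENNReal.one_ne_top]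
    simp [hsdef]
  have hs0 : (0 : ℝ) ≤ s := by
    rw [hsdef]
    have : (b : ℝ)⁻¹ ≤ 2⁻¹ := by
      apply inv_anti₀ (by norm_num)
      linarith
    linarith
  have hsr : s ^ b ≤ r ^ b * r ^ b := by
    have h1 : s ≤ r ^ 2 := by
      have hbpos : (0 : ℝ) < (b : ℝ) := by linarith
      have h2 : r ^ 2 = 1 - 2 * (b : ℝ)⁻¹ + ((b : ℝ)⁻¹) ^ 2 := by rw [hrdef]; ring
      have := sq_nonneg ((b : ℝ)⁻¹)
      rw [hsdef, h2]; linarith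
    calc s ^ b ≤ (r ^ 2) ^ b := pow_le_pow_left₀ hs0 h1 b
      _ = r ^ b * r ^ b := by rw [← pow_mul, two_mul, pow_add]
  -- indicator decomposition
  set X : Fin b → Ω → ℝ := fun i => (A i).indicator (fun _ => (1 : ℝ)) with hXdef
  have hYeq : (fun ω => (((B.filter (fun i => ∀ j, Z j ω ≠ i)).card : ℝ))) =
      fun ω => ∑ i ∈ B, X i ω := by
    funext ω
    rw [Finset.card_filter]
    push_cast
    refine Finset.sum_congr rfl fun i _ => ?_
    by_cases h : ∀ j, Z j ω ≠ i
    · have : ω ∈ A i := by simp [hAdef, Set.mem_iInter, h]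
      simp [h, hXdef, Set.indicator_of_mem this]
    · have : ω ∉ A i := by
        simp only [hAdef, Set.mem_iInter, Set.mem_compl_iff, Set.mem_preimage,
          Set.mem_singleton_iff]
        exact h
      simp [h, hXdef, Set.indicator_of_notMem this]
  have hXmem : ∀ i, MemLp (X i) 2 μ := fun i =>
    memLp_indicator_const 2 (hA i) 1 (Or.inr (measure_ne_top μ _))
  have hXint : ∀ i, Integrable (X i) μ := fun i => (hXmem i).integrable one_le_two
  have hXval : ∀ i, ∫ ω, X i ω ∂μ = (μ (A i)).toReal := by
    intro i
    rw [hXdef]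
    simp [integral_indicator_const (1 : ℝ) (hA i), Measure.real]
  -- products of indicators
  have hprod : ∀ i i' : Fin b, (fun ω => X i ω * X i' ω) =
      (A i ∩ A i').indicator (fun _ => (1 : ℝ)) := by
    intro i i'
    funext ω
    by_cases h1 : ω ∈ A i <;> by_cases h2 : ω ∈ A i' <;>
      simp [hXdef, Set.indicator_apply, h1, h2, Set.mem_inter_iff]
  have hWint : ∀ i i' : Fin b, Integrable ((A i ∩ A i').indicator (fun _ => (1 : ℝ))) μ :=
    fun i i' => (integrable_const (1 : ℝ)).indicator ((hA i).inter (hA i'))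
  have hWval : ∀ i i' : Fin b,
      ∫ ω, (A i ∩ A i').indicator (fun _ => (1 : ℝ)) ω ∂μ = (μ (A i ∩ A i')).toReal := by
    intro i i'
    simp [integral_indicator_const (1 : ℝ) ((hA i).inter (hA i')), Measure.real]
  -- Memℒp of Y
  have hYmem : MemLp (fun ω => (((B.filter (fun i => ∀ j, Z j ω ≠ i)).card : ℝ))) 2 μ := by
    rw [hYeq]
    exact memLp_finset_sum B fun i _ => hXmem i
  rw [variance_eq_sub hYmem]
  -- compute the two integrals
  have hEY : ∫ ω, (((B.filter (fun i => ∀ j, Z j ω ≠ i)).card : ℝ)) ∂μ =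
      ∑ i ∈ B, (μ (A i)).toReal := by
    rw [hYeq, integral_finset_sum B fun i _ => hXint i]
    exact Finset.sum_congr rfl fun i _ => hXval i
  have hEY2 : ∫ ω, ((fun ω => (((B.filter (fun i => ∀ j, Z j ω ≠ i)).card : ℝ))) ^ 2) ω ∂μ =
      ∑ i ∈ B, ∑ i' ∈ B, (μ (A i ∩ A i')).toReal := by
    have heq : ((fun ω => (((B.filter (fun i => ∀ j, Z j ω ≠ i)).card : ℝ))) ^ 2) =
        fun ω => ∑ i ∈ B, ∑ i' ∈ B, (A i ∩ A i').indicator (fun _ => (1 : ℝ)) ω := by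
      funext ω
      simp only [Pi.pow_apply, hYeq]
      rw [sq, Finset.sum_mul_sum]
      refine Finset.sum_congr rfl fun i _ => Finset.sum_congr rfl fun i' _ => ?_
      rw [← hprod i i']
    rw [heq, integral_finset_sum B fun i _ =>
      integrable_finset_sum B fun i' _ => hWint i i']
    refine Finset.sum_congr rfl fun i _ => ?_
    rw [integral_finset_sum B fun i' _ => hWint i i']
    exact Finset.sum_congr rfl fun i' _ => hWval i i'
  rw [hEY, hEY2]
  -- expand the square of the sum
  rw [sq, Finset.sum_mul_sum, ← Finset.sum_sub_distrib]
  have hsum : ∀ i ∈ B, (∑ i' ∈ B, (μ (A i ∩ A i')).toReal -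
      ∑ i' ∈ B, (μ (A i)).toReal * (μ (A i')).toReal) ≤ 1 := by
    intro i _
    rw [← Finset.sum_sub_distrib]
    calc ∑ i' ∈ B, ((μ (A i ∩ A i')).toReal - (μ (A i)).toReal * (μ (A i')).toReal)
        ≤ ∑ i' ∈ B, (if i' = i then 1 else 0) := by
          refine Finset.sum_le_sum fun i' _ => ?_
          by_cases h : i' = i
          · subst h
            rw [if_pos rfl]
            have h1 : (μ (A i' ∩ A i')).toReal ≤ 1 :=
              ENNReal.toReal_le_of_le_ofReal one_pos.le (by simpa using prob_le_one)
            have h2 := mul_self_nonneg ((μ (A i')).toReal)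
            linarith
          · simp only [if_neg h]
            rw [hsval i i' (fun hh => h hh.symm), hrval i, hrval i']
            linarith [hsr]
      _ ≤ 1 := by
          rw [Finset.sum_ite_eq' B i (fun _ => (1 : ℝ))]
          split <;> norm_num
  calc ∑ i ∈ B, (∑ i' ∈ B, (μ (A i ∩ A i')).toReal -
        ∑ i' ∈ B, (μ (A i)).toReal * (μ (A i')).toReal)
      ≤ ∑ _i ∈ B, (1 : ℝ) := Finset.sum_le_sum hsum
    _ = B.card := by simp
    _ ≤ (b : ℝ) / 2 := by
        rw [hB]
        calc ((b / 2 : ℕ) : ℝ) ≤ (b : ℝ) / 2 := Nat.cast_div_le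
          _ ≤ (b : ℝ) / 2 := le_refl _
    _ ≤ (b : ℝ) ^ 2 / 64 := by nlinarith
end

section
/- Let k ≥ 1 be an integer, set b = 32k + 16, let Z₁, …, Z_b be i.i.d. random variables each uniformly distributed on {1, …, b}, let B ⊆ {1, …, b} be a subset with |B| = b/2, and let Y be the number of indices i ∈ B such that Zⱼ ≠ i for every j ∈ {1, …, b}. Then Pr[Y > 3b/8] < 4/9, and consequently Pr[b/2 − Y > 4k + 2] > 5/9, i.e. with probability greater than 5/9 more than 4k+2 of the blocks in B contain at least one of the points Z₁, …, Z_b. -/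
open MeasureTheory ProbabilityTheory

set_option maxHeartbeats 1000000

lemma slot_pow_le_half (n : ℕ) (hn : 1 ≤ n) : ((n - 1 : ℝ) / n) ^ n ≤ 1 / 2 := by
  have hn0 : (0 : ℝ) < n := by exact_mod_cast hn
  have hx0 : (0 : ℝ) < 1 / (n : ℝ) := by positivity
  have hx1 : (1 : ℝ) / (n : ℝ) ≤ 1 := by
    rw [div_le_one hn0]; exact_mod_cast hn
  have h1 : ((n - 1 : ℝ) / n) = 1 - 1 / (n : ℝ) := by
    rw [sub_div, div_self (ne_of_gt hn0)]
  have hb : (1 : ℝ) + (n : ℝ) * (1 / (n : ℝ)) ≤ (1 + 1 / (n : ℝ)) ^ n :=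
    one_add_mul_le_pow (by linarith) n
  have hnx : (n : ℝ) * (1 / (n : ℝ)) = 1 := by field_simp
  have h2 : (2 : ℝ) ≤ (1 + 1 / (n : ℝ)) ^ n := by rw [hnx] at hb; linarith
  have h3 : (1 - 1 / (n : ℝ)) ^ n * (1 + 1 / (n : ℝ)) ^ n ≤ 1 := by
    rw [← mul_pow]
    have he : (1 - 1 / (n : ℝ)) * (1 + 1 / (n : ℝ)) = 1 - (1 / (n : ℝ)) ^ 2 := by ring
    rw [he]
    apply pow_le_one₀ (by nlinarith) (by nlinarith)
  have h4 : (0 : ℝ) ≤ (1 - 1 / (n : ℝ)) ^ n := by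
    apply pow_nonneg; linarith
  rw [h1]
  nlinarith [mul_le_mul_of_nonneg_left h2 h4]

lemma slot_pow_le_frac (q : ℕ) (hq : 1 ≤ q) :
    ((4 * q - 2 : ℝ) / (4 * q)) ^ (4 * q) ≤ 16 / 81 := by
  have hq0 : (1 : ℝ) ≤ q := by exact_mod_cast hq
  have hn0 : (0 : ℝ) < 4 * (q : ℝ) := by positivity
  have hx0 : (0 : ℝ) < 2 / (4 * (q : ℝ)) := by positivity
  have hx1 : 2 / (4 * (q : ℝ)) ≤ 1 := by
    rw [div_le_one hn0]; nlinarith [hq0]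
  have h1 : ((4 * (q : ℝ) - 2) / (4 * q)) = 1 - 2 / (4 * (q : ℝ)) := by
    field_simp
  have hqx : (q : ℝ) * (2 / (4 * (q : ℝ))) = 1 / 2 := by
    field_simp; ring
  have hb : (1 : ℝ) + (q : ℝ) * (2 / (4 * (q : ℝ))) ≤ (1 + 2 / (4 * (q : ℝ))) ^ q :=
    one_add_mul_le_pow (by linarith) q
  have h2 : (3 / 2 : ℝ) ≤ (1 + 2 / (4 * (q : ℝ))) ^ q := by rw [hqx] at hb; linarith
  have h2' : (81 / 16 : ℝ) ≤ (1 + 2 / (4 * (q : ℝ))) ^ (4 * q) := by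
    have he : (1 + 2 / (4 * (q : ℝ))) ^ (4 * q) = ((1 + 2 / (4 * (q : ℝ))) ^ q) ^ 4 := by
      rw [← pow_mul]; congr 1; omega
    rw [he]
    calc (81 / 16 : ℝ) = (3 / 2) ^ 4 := by norm_num
    _ ≤ ((1 + 2 / (4 * (q : ℝ))) ^ q) ^ 4 := by
        apply pow_le_pow_left₀ (by norm_num) h2
  have h3 : (1 - 2 / (4 * (q : ℝ))) ^ (4 * q) * (1 + 2 / (4 * (q : ℝ))) ^ (4 * q) ≤ 1 := by
    rw [← mul_pow]
    have he : (1 - 2 / (4 * (q : ℝ))) * (1 + 2 / (4 * (q : ℝ)))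
        = 1 - (2 / (4 * (q : ℝ))) ^ 2 := by ring
    rw [he]
    apply pow_le_one₀ (by nlinarith) (by nlinarith)
  have h4 : (0 : ℝ) ≤ (1 - 2 / (4 * (q : ℝ))) ^ (4 * q) := by
    apply pow_nonneg; linarith
  rw [h1]
  nlinarith [mul_le_mul_of_nonneg_left h2' h4]

lemma slot_meas_inter {Ω : Type*} [MeasurableSpace Ω] (μ : Measure Ω) [IsProbabilityMeasure μ]
    (b : ℕ) (hb0 : 0 < b) (Z : Fin b → Ω → Fin b) (hmeas : ∀ j, Measurable (Z j))
    (hunif : ∀ j i, μ (Z j ⁻¹' {i}) = (b : ENNReal)⁻¹)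
    (hindep : iIndepFun Z μ)
    (S : Finset (Fin b)) :
    μ (⋂ j, Z j ⁻¹' (↑S)ᶜ) = ENNReal.ofReal (((b - S.card : ℝ) / b) ^ b) := by
  have hbE : ((b : ENNReal)) ≠ 0 := by exact_mod_cast Nat.pos_iff_ne_zero.mp hb0
  have hcard : S.card ≤ b := by
    simpa using Finset.card_le_univ S
  -- measure of one preimage of S
  have hS : ∀ j, μ (Z j ⁻¹' ↑S) = S.card * (b : ENNReal)⁻¹ := by
    intro j
    have hU : (↑S : Set (Fin b)) = ⋃ i ∈ S, ({i} : Set (Fin b)) :=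
      (Set.biUnion_of_singleton _).symm
    rw [hU, Set.preimage_iUnion₂, measure_biUnion_finset]
    · simp [hunif j, Finset.sum_const, nsmul_eq_mul]
    · intro x _ y _ hxy
      apply Disjoint.preimage
      simp [Set.disjoint_singleton, hxy]
    · intro i _
      exact (hmeas j) (MeasurableSet.of_discrete)
  have hSc : ∀ j, μ (Z j ⁻¹' (↑S)ᶜ) = 1 - S.card * (b : ENNReal)⁻¹ := by
    intro j
    rw [Set.preimage_compl, prob_compl_eq_one_sub ((hmeas j) MeasurableSet.of_discrete), hS j]
  have hind := hindep.meas_iInter (s := fun j => Z j ⁻¹' (↑S)ᶜ)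
    (fun j => ⟨(↑S)ᶜ, MeasurableSet.of_discrete, rfl⟩)
  rw [hind]
  rw [Finset.prod_congr rfl (fun j _ => hSc j), Finset.prod_const, Finset.card_univ,
    Fintype.card_fin]
  -- convert to ofReal
  have h1 : (1 : ENNReal) - S.card * (b : ENNReal)⁻¹ = ((b - S.card : ℕ) : ENNReal) / b := by
    have hadd : ((b - S.card : ℕ) : ENNReal) / b + S.card * (b : ENNReal)⁻¹ = 1 := by
      rw [div_eq_mul_inv, ← add_mul]
      have : ((b - S.card : ℕ) : ENNReal) + S.card = b := by
        rw [← Nat.cast_add, Nat.sub_add_cancel hcard]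
      rw [this, ENNReal.mul_inv_cancel hbE (by simp)]
    exact (ENNReal.eq_sub_of_add_eq (by finiteness) hadd).symm
  rw [h1]
  have h2 : ((b - S.card : ℕ) : ENNReal) / b = ENNReal.ofReal ((b - S.card : ℝ) / b) := by
    rw [ENNReal.ofReal_div_of_pos (by exact_mod_cast hb0)]
    congr 1
    · rw [← Nat.cast_sub hcard]
      exact (ENNReal.ofReal_natCast _).symm
    · exact (ENNReal.ofReal_natCast _).symm
  rw [h2, ← ENNReal.ofReal_pow]
  have hb0' : (0:ℝ) < b := by exact_mod_cast hb0
  have : (0:ℝ) ≤ (b : ℝ) - S.card := by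
    have : (S.card : ℝ) ≤ b := by exact_mod_cast hcard
    linarith
  positivity

/-- For `b = 32k+16` points thrown i.i.d. uniformly into `b` blocks, with
probability `> 5/9` more than `4k+2` of the `b/2` designated blocks are occupied
(equivalently, the number `Y` of empty designated blocks satisfies `Pr[Y > 3b/8] < 4/9`). -/
theorem slotting_chebyshev {Ω : Type*} [MeasurableSpace Ω] (μ : Measure Ω)
    [IsProbabilityMeasure μ] (k : ℕ) (hk : 1 ≤ k) (b : ℕ) (hb : b = 32 * k + 16)
    (Z : Fin b → Ω → Fin b) (hmeas : ∀ j, Measurable (Z j))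
    (hunif : ∀ j i, μ (Z j ⁻¹' {i}) = (b : ENNReal)⁻¹)
    (hindep : iIndepFun Z μ)
    (B : Finset (Fin b)) (hB : B.card = b / 2) :
    μ {ω | 3 * (b : ℝ) / 8 < ((B.filter (fun i => ∀ j, Z j ω ≠ i)).card : ℝ)} <
        (4 : ENNReal) / 9 ∧
      (5 : ENNReal) / 9 <
        μ {ω | 4 * (k : ℝ) + 2 <
          (b : ℝ) / 2 - ((B.filter (fun i => ∀ j, Z j ω ≠ i)).card : ℝ)} := by
  have hb0 : 0 < b := by omega
  have hm : B.card = 16 * k + 8 := by omega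
  -- the events
  set A : Fin b → Set Ω := fun i => ⋂ j, Z j ⁻¹' ({i} : Set (Fin b))ᶜ with hAdef
  have hAmeas : ∀ i, MeasurableSet (A i) :=
    fun i => MeasurableSet.iInter fun j => (hmeas j) MeasurableSet.of_discrete
  have hmemA : ∀ ω i, ω ∈ A i ↔ ∀ j, Z j ω ≠ i := by
    intro ω i
    simp [hAdef, Set.mem_iInter]
  -- single event probability and bound
  have hp1 : ∀ i, μ (A i) ≤ ENNReal.ofReal (1 / 2) := by
    intro i
    have h1 : μ (A i) = ENNReal.ofReal (((b - 1 : ℝ) / b) ^ b) := by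
      have := slot_meas_inter μ b hb0 Z hmeas hunif hindep {i}
      simp only [hAdef]
      simpa using this
    rw [h1]
    exact ENNReal.ofReal_le_ofReal (slot_pow_le_half b (by omega))
  -- pair probability and bound
  have hp2 : ∀ i i', i ≠ i' →
      μ (A i ∩ A i') ≤ ENNReal.ofReal (16 / 81) := by
    intro i i' hne
    have hset : A i ∩ A i' = ⋂ j, Z j ⁻¹' (↑({i, i'} : Finset (Fin b)))ᶜ := by
      ext ω
      simp only [hAdef, Set.mem_inter_iff, Set.mem_iInter, Set.mem_preimage,
        Set.mem_compl_iff, Set.mem_singleton_iff, Finset.coe_insert,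
        Finset.coe_singleton, Set.mem_insert_iff]
      constructor
      · rintro ⟨h1, h2⟩ j h
        rcases h with h | h
        · exact h1 j h
        · exact h2 j h
      · intro h
        exact ⟨fun j hj => h j (Or.inl hj), fun j hj => h j (Or.inr hj)⟩
    have hc2 : ({i, i'} : Finset (Fin b)).card = 2 := by
      rw [Finset.card_insert_of_notMem (by simp [hne]), Finset.card_singleton]
    have heq : μ (A i ∩ A i') = ENNReal.ofReal (((b - 2 : ℝ) / b) ^ b) := by
      rw [hset, slot_meas_inter μ b hb0 Z hmeas hunif hindep, hc2]
      norm_num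
    rw [heq]
    apply ENNReal.ofReal_le_ofReal
    have hq := slot_pow_le_frac (8 * k + 4) (by omega)
    have hbq : b = 4 * (8 * k + 4) := by omega
    have hcast : ((4 * (8 * k + 4) : ℕ) : ℝ) = 4 * ((8 * k + 4 : ℕ) : ℝ) := by push_cast; ring
    rw [hbq]
    calc ((((4 * (8 * k + 4) : ℕ) : ℝ) - 2) / ((4 * (8 * k + 4) : ℕ) : ℝ)) ^ (4 * (8 * k + 4))
        = ((4 * ((8 * k + 4 : ℕ) : ℝ) - 2) / (4 * ((8 * k + 4 : ℕ) : ℝ))) ^ (4 * (8 * k + 4)) := by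
          rw [hcast]
      _ ≤ 16 / 81 := hq
  -- the counting function
  set g : Ω → ENNReal := fun ω => ((B.filter (fun i => ∀ j, Z j ω ≠ i)).card : ENNReal)
    with hgdef
  have hgsum : ∀ ω, g ω = ∑ i ∈ B, (A i).indicator (fun _ => (1 : ENNReal)) ω := by
    intro ω
    rw [hgdef]
    simp only [Finset.card_filter]
    push_cast
    apply Finset.sum_congr rfl
    intro i _
    by_cases h : ∀ j, Z j ω ≠ i
    · rw [if_pos h, Set.indicator_of_mem ((hmemA ω i).mpr h)]
    · rw [if_neg h, Set.indicator_of_notMem (fun hc => h ((hmemA ω i).mp hc))]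
  have hgmeas : Measurable g := by
    have : ∀ ω, g ω = ∑ i ∈ B, (A i).indicator (fun _ => (1 : ENNReal)) ω := hgsum
    rw [funext this]
    exact Finset.measurable_sum _ fun i _ => Measurable.indicator measurable_const (hAmeas i)
  -- the second moment
  have hsq : ∀ ω, g ω ^ 2 =
      ∑ i ∈ B, ∑ i' ∈ B, (A i ∩ A i').indicator (fun _ => (1 : ENNReal)) ω := by
    intro ω
    rw [hgsum ω, sq, Finset.sum_mul_sum]
    apply Finset.sum_congr rfl
    intro i _
    apply Finset.sum_congr rfl
    intro i' _
    rw [← Set.inter_indicator_mul]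
    simp
  have hL : ∫⁻ ω, g ω ^ 2 ∂μ = ∑ i ∈ B, ∑ i' ∈ B, μ (A i ∩ A i') := by
    rw [lintegral_congr hsq]
    rw [lintegral_finset_sum _ (fun i _ => Finset.measurable_sum _ fun i' _ =>
      Measurable.indicator measurable_const ((hAmeas i).inter (hAmeas i')))]
    apply Finset.sum_congr rfl
    intro i _
    rw [lintegral_finset_sum _ (fun i' _ =>
      Measurable.indicator measurable_const ((hAmeas i).inter (hAmeas i')))]
    apply Finset.sum_congr rfl
    intro i' _
    rw [lintegral_indicator ((hAmeas i).inter (hAmeas i'))]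
    simp
  -- bound the second moment
  have hLle : ∫⁻ ω, g ω ^ 2 ∂μ ≤
      (B.card : ENNReal) * ((B.card : ENNReal) * ENNReal.ofReal (16 / 81)
        + ENNReal.ofReal (1 / 2)) := by
    rw [hL]
    calc ∑ i ∈ B, ∑ i' ∈ B, μ (A i ∩ A i')
        ≤ ∑ i ∈ B, ((B.card : ENNReal) * ENNReal.ofReal (16 / 81)
            + ENNReal.ofReal (1 / 2)) := by
          apply Finset.sum_le_sum
          intro i hi
          rw [← Finset.sum_erase_add _ _ hi]
          apply add_le_add
          · calc ∑ i' ∈ B.erase i, μ (A i ∩ A i')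
                ≤ ∑ i' ∈ B.erase i, ENNReal.ofReal (16 / 81) := by
                  apply Finset.sum_le_sum
                  intro i' hi'
                  exact hp2 i i' (Ne.symm (Finset.ne_of_mem_erase hi'))
              _ = ((B.erase i).card : ENNReal) * ENNReal.ofReal (16 / 81) := by
                  rw [Finset.sum_const, nsmul_eq_mul]
              _ ≤ (B.card : ENNReal) * ENNReal.ofReal (16 / 81) :=
                  mul_le_mul_left (by exact_mod_cast Finset.card_erase_le) _
          · calc μ (A i ∩ A i) = μ (A i) := by rw [Set.inter_self]
              _ ≤ ENNReal.ofReal (1 / 2) := hp1 i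
      _ = (B.card : ENNReal) * ((B.card : ENNReal) * ENNReal.ofReal (16 / 81)
            + ENNReal.ofReal (1 / 2)) := by
          rw [Finset.sum_const, nsmul_eq_mul]
  -- Markov's inequality at threshold t = 12k+6
  set t : ℕ := 12 * k + 6 with htdef
  set M : Set Ω := {ω | (t : ENNReal) ≤ g ω} with hMdef
  have hMmeas : MeasurableSet M := measurableSet_le measurable_const hgmeas
  have hMsq : M = {ω | ((t : ENNReal)) ^ 2 ≤ g ω ^ 2} := by
    ext ω
    simp only [hMdef, Set.mem_setOf_eq]
    constructor
    · intro h
      exact pow_le_pow_left' h 2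
    · intro h
      by_contra hc
      push_neg at hc
      exact absurd h (not_le.mpr (ENNReal.pow_lt_pow_left (by norm_num) hc))
  have hmarkov : (t : ENNReal) ^ 2 * μ M ≤ ∫⁻ ω, g ω ^ 2 ∂μ := by
    rw [hMsq]
    exact mul_meas_ge_le_lintegral₀ (hgmeas.pow_const 2).aemeasurable _
  -- numeric comparison
  have hnum : (B.card : ENNReal) * ((B.card : ENNReal) * ENNReal.ofReal (16 / 81)
      + ENNReal.ofReal (1 / 2)) < (t : ENNReal) ^ 2 * ((4 : ENNReal) / 9) := by
    have hlhs : (B.card : ENNReal) * ((B.card : ENNReal) * ENNReal.ofReal (16 / 81)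
        + ENNReal.ofReal (1 / 2))
        = ENNReal.ofReal ((B.card : ℝ) * ((B.card : ℝ) * (16 / 81) + 1 / 2)) := by
      rw [ENNReal.ofReal_mul (by positivity), ENNReal.ofReal_add (by positivity) (by norm_num),
        ENNReal.ofReal_mul (by positivity)]
      simp [ENNReal.ofReal_natCast]
    have hrhs : (t : ENNReal) ^ 2 * ((4 : ENNReal) / 9)
        = ENNReal.ofReal ((t : ℝ) ^ 2 * (4 / 9)) := by
      rw [ENNReal.ofReal_mul (by positivity), ENNReal.ofReal_pow (by positivity),
        ENNReal.ofReal_natCast]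
      congr 1
      rw [ENNReal.ofReal_div_of_pos (by norm_num)]
      norm_num
    rw [hlhs, hrhs]
    apply ENNReal.ofReal_lt_ofReal_iff_of_nonneg (by positivity) |>.mpr
    have hmr : (B.card : ℝ) = 16 * k + 8 := by rw [hm]; push_cast; ring
    have htr : (t : ℝ) = 12 * k + 6 := by rw [htdef]; push_cast; ring
    have hkr : (1 : ℝ) ≤ k := by exact_mod_cast hk
    rw [hmr, htr]
    nlinarith [sq_nonneg ((k : ℝ) - 1), hkr]
  -- conclude: μ M < 4/9
  have hM49 : μ M < (4 : ENNReal) / 9 := by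
    have h1 : (t : ENNReal) ^ 2 * μ M < (t : ENNReal) ^ 2 * ((4 : ENNReal) / 9) :=
      lt_of_le_of_lt (hmarkov.trans hLle) hnum
    have htne : (t : ENNReal) ≠ 0 := by
      exact_mod_cast (by omega : t ≠ 0)
    have ht0 : ((t : ENNReal)) ^ 2 ≠ 0 := pow_ne_zero 2 htne
    have httop : ((t : ENNReal)) ^ 2 ≠ ⊤ := ENNReal.pow_ne_top (ENNReal.natCast_ne_top t)
    exact (ENNReal.mul_lt_mul_iff_right ht0 httop).mp h1
  constructor
  · -- first part
    apply lt_of_le_of_lt _ hM49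
    apply measure_mono
    intro ω hω
    simp only [Set.mem_setOf_eq] at hω ⊢
    rw [hMdef]
    simp only [Set.mem_setOf_eq, hgdef]
    have hbr : 3 * (b : ℝ) / 8 = (t : ℝ) := by
      rw [hb, htdef]; push_cast; ring
    rw [hbr] at hω
    have : t ≤ (B.filter (fun i => ∀ j, Z j ω ≠ i)).card := by
      by_contra hc
      push_neg at hc
      have : ((B.filter (fun i => ∀ j, Z j ω ≠ i)).card : ℝ) < (t : ℝ) := by
        exact_mod_cast hc
      linarith
    exact_mod_cast this
  · -- second part
    have hcompl : {ω | 4 * (k : ℝ) + 2 <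
        (b : ℝ) / 2 - ((B.filter (fun i => ∀ j, Z j ω ≠ i)).card : ℝ)} = Mᶜ := by
      ext ω
      simp only [Set.mem_setOf_eq, Set.mem_compl_iff, hMdef, hgdef, not_le]
      have hbr : (b : ℝ) / 2 = 16 * (k : ℝ) + 8 := by rw [hb]; push_cast; ring
      rw [hbr]
      constructor
      · intro h
        have : ((B.filter (fun i => ∀ j, Z j ω ≠ i)).card : ℝ) < 12 * (k : ℝ) + 6 := by
          linarith
        have h2 : (B.filter (fun i => ∀ j, Z j ω ≠ i)).card < t := by
          rw [htdef]
          exact_mod_cast this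
        exact_mod_cast h2
      · intro h
        have h2 : (B.filter (fun i => ∀ j, Z j ω ≠ i)).card < t := by exact_mod_cast h
        have : ((B.filter (fun i => ∀ j, Z j ω ≠ i)).card : ℝ) < (t : ℝ) := by
          exact_mod_cast h2
        rw [htdef] at this
        push_cast at this
        linarith
    rw [hcompl, prob_compl_eq_one_sub hMmeas]
    have h59 : (1 : ENNReal) ≤ (5 : ENNReal) / 9 + μ M → False := by
      intro hcon
      have hlt : (5 : ENNReal) / 9 + μ M < 5 / 9 + 4 / 9 :=
        ENNReal.add_lt_add_left ((ENNReal.div_lt_top (by norm_num) (by norm_num)).ne) hM49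
      have h9 : (5 : ENNReal) / 9 + 4 / 9 = 1 := by
        rw [ENNReal.div_add_div_same]
        norm_num
        exact ENNReal.div_self (by norm_num) (by norm_num)
      rw [h9] at hlt
      exact absurd (lt_of_le_of_lt hcon hlt) (lt_irrefl _)
    by_contra hcon
    push_neg at hcon
    exact h59 (tsub_le_iff_right.mp hcon)
end

section
/- Let λ be a real number with 0 < λ ≤ 1/2, let σ_c ≥ 0 and σ_f ≥ 1 be integers, and let X₁, …, X_{σ_c}, Y₁, …, Y_{σ_f} be independent random variables taking values in {0,1} with E[Xᵢ] = 1/2 for every i and E[Yⱼ] = 1/2 + λ for every j. Then Pr[Σᵢ Xᵢ + Σⱼ Yⱼ ≤ (σ_c + σ_f)/2] ≤ exp(−λ²·σ_f²/(2·σ_f + σ_c)). -/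
open MeasureTheory ProbabilityTheory


lemma exp_le_one_add_add_sq_half {t : ℝ} (ht : t ≤ 0) :
    Real.exp t ≤ 1 + t + t ^ 2 / 2 := by
  have hmono : Monotone (fun t : ℝ => Real.exp t - (1 + t + t ^ 2 / 2)) := by
    apply monotone_of_deriv_nonneg
    · fun_prop
    · intro x
      have h : HasDerivAt (fun t : ℝ => Real.exp t - (1 + t + t ^ 2 / 2))
          (Real.exp x - (0 + 1 + (2 : ℕ) * x ^ (2 - 1) / 2)) x :=
        (Real.hasDerivAt_exp x).sub
          (((hasDerivAt_const x (1:ℝ)).add (hasDerivAt_id x)).add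
            ((hasDerivAt_pow 2 x).div_const 2))
      rw [h.deriv]
      norm_num
      nlinarith [Real.add_one_le_exp x]
  have h0 := hmono ht
  simp only [Real.exp_zero] at h0
  nlinarith

lemma mgf_of_zero_one {Ω : Type*} [MeasurableSpace Ω] (μ : Measure Ω)
    [IsProbabilityMeasure μ] (Z : Ω → ℝ) (hm : Measurable Z)
    (h01 : ∀ ω, Z ω = 0 ∨ Z ω = 1) (t : ℝ) :
    mgf Z μ t = 1 + (Real.exp t - 1) * (∫ ω, Z ω ∂μ) := by
  have hZint : Integrable Z μ := by
    apply (integrable_const (1 : ℝ)).mono' hm.aestronglyMeasurable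
    filter_upwards with ω
    rcases h01 ω with h | h <;> simp [h]
  have hpt : ∀ ω, Real.exp (t * Z ω) = 1 + (Real.exp t - 1) * Z ω := by
    intro ω
    rcases h01 ω with h | h <;> simp [h]
  unfold mgf
  calc ∫ ω, Real.exp (t * Z ω) ∂μ = ∫ ω, (1 + (Real.exp t - 1) * Z ω) ∂μ :=
        integral_congr_ae (Filter.Eventually.of_forall hpt)
    _ = 1 + (Real.exp t - 1) * ∫ ω, Z ω ∂μ := by
        rw [integral_add (integrable_const 1) (hZint.const_mul _),
          integral_const, integral_const_mul]
        simp

lemma integrable_exp_mul_of_zero_one {Ω : Type*} [MeasurableSpace Ω] (μ : Measure Ω)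
    [IsProbabilityMeasure μ] (Z : Ω → ℝ) (hm : Measurable Z)
    (h01 : ∀ ω, Z ω = 0 ∨ Z ω = 1) (t : ℝ) :
    Integrable (fun ω => Real.exp (t * Z ω)) μ := by
  apply (integrable_const (max 1 (Real.exp t))).mono'
    ((hm.const_mul t).exp.aestronglyMeasurable)
  filter_upwards with ω
  rcases h01 ω with h | h <;>
    simp [h, abs_of_nonneg (Real.exp_nonneg _), le_max_left, le_max_right]

set_option maxHeartbeats 1000000 in
/-- An ordering disagreeing with the true order on `σ_c` λ-close comparisons
(correct with probability exactly `1/2`) and `σ_f` λ-far comparisons (correct with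
probability exactly `1/2 + λ`) beats the true order on at least half of the differing
comparisons with probability at most `exp(−λ²σ_f²/(2σ_f + σ_c))`. -/
theorem mle_far_comparison_bound {Ω : Type*} [MeasurableSpace Ω] (μ : Measure Ω)
    [IsProbabilityMeasure μ] (lam : ℝ) (hlam0 : 0 < lam) (hlam1 : lam ≤ 1 / 2)
    (σc σf : ℕ) (hσf : 1 ≤ σf)
    (X : Fin σc → Ω → ℝ) (Y : Fin σf → Ω → ℝ)
    (hXmeas : ∀ i, Measurable (X i)) (hYmeas : ∀ j, Measurable (Y j))
    (hX01 : ∀ i ω, X i ω = 0 ∨ X i ω = 1) (hY01 : ∀ j ω, Y j ω = 0 ∨ Y j ω = 1)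
    (hindep : iIndepFun (Sum.elim X Y) μ)
    (hXmean : ∀ i, (∫ ω, X i ω ∂μ) = 1 / 2)
    (hYmean : ∀ j, (∫ ω, Y j ω ∂μ) = 1 / 2 + lam) :
    μ {ω | ∑ i, X i ω + ∑ j, Y j ω ≤ ((σc : ℝ) + σf) / 2} ≤
      ENNReal.ofReal (Real.exp (-(lam ^ 2 * (σf : ℝ) ^ 2 / (2 * σf + σc)))) := by
  set Z : Fin σc ⊕ Fin σf → Ω → ℝ := Sum.elim X Y with hZ
  have hZmeas : ∀ k, Measurable (Z k) := by rintro (i | j) <;> [exact hXmeas i; exact hYmeas j]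
  have hZ01 : ∀ k ω, Z k ω = 0 ∨ Z k ω = 1 := by
    rintro (i | j) ω <;> [exact hX01 i ω; exact hY01 j ω]
  set D : ℝ := 2 * σf + σc with hD
  have hσf' : (1 : ℝ) ≤ σf := by exact_mod_cast hσf
  have hσc' : (0 : ℝ) ≤ σc := Nat.cast_nonneg _
  have hDpos : 0 < D := by rw [hD]; positivity
  set t : ℝ := -(2 * lam * σf / D) with ht
  have htneg : t ≤ 0 := by
    rw [ht]; simp only [neg_nonpos]; positivity
  set ε : ℝ := ((σc : ℝ) + σf) / 2 with hε
  have hsum : ∀ ω, ∑ i, X i ω + ∑ j, Y j ω = (∑ k, Z k) ω := by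
    intro ω
    rw [Finset.sum_apply, Fintype.sum_sum_type]
    rfl
  have hint : ∀ k, Integrable (fun ω => Real.exp (t * Z k ω)) μ := fun k =>
    integrable_exp_mul_of_zero_one μ (Z k) (hZmeas k) (hZ01 k) t
  have hintS : Integrable (fun ω => Real.exp (t * (∑ k, Z k) ω)) μ :=
    hindep.integrable_exp_mul_sum hZmeas (fun k _ => hint k)
  have hcher := measure_le_le_exp_mul_mgf (X := ∑ k, Z k) (μ := μ) ε htneg hintS
  have hmgf : mgf (∑ k, Z k) μ t = ∏ k, mgf (Z k) μ t := hindep.mgf_sum hZmeas _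
  set p : Fin σc ⊕ Fin σf → ℝ := fun k => ∫ ω, Z k ω ∂μ with hp
  have hpval : ∀ k, p k = 1/2 ∨ p k = 1/2 + lam := by
    rintro (i | j)
    · left; exact hXmean i
    · right; exact hYmean j
  have hpnonneg : ∀ k, 0 ≤ p k := by
    intro k; rcases hpval k with h | h <;> rw [h] <;> nlinarith
  have hmgfk : ∀ k, mgf (Z k) μ t ≤ Real.exp ((t + t ^ 2 / 2) * p k) := by
    intro k
    rw [mgf_of_zero_one μ (Z k) (hZmeas k) (hZ01 k) t]
    have h1 := Real.add_one_le_exp ((Real.exp t - 1) * p k)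
    have h2 : Real.exp ((Real.exp t - 1) * p k) ≤ Real.exp ((t + t ^ 2 / 2) * p k) := by
      apply Real.exp_le_exp.mpr
      have := exp_le_one_add_add_sq_half htneg
      nlinarith [hpnonneg k]
    linarith
  have hprod : ∏ k, mgf (Z k) μ t ≤ Real.exp ((t + t ^ 2 / 2) * ∑ k, p k) := by
    calc ∏ k, mgf (Z k) μ t ≤ ∏ k, Real.exp ((t + t ^ 2 / 2) * p k) :=
          Finset.prod_le_prod (fun k _ => mgf_nonneg) (fun k _ => hmgfk k)
      _ = Real.exp (∑ k, (t + t ^ 2 / 2) * p k) := (Real.exp_sum _ _).symm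
      _ = _ := by rw [← Finset.mul_sum]
  set m : ℝ := (σc : ℝ) / 2 + (σf : ℝ) * (1/2 + lam) with hm
  have hsump : ∑ k, p k = m := by
    rw [Fintype.sum_sum_type]
    have h1 : ∀ i : Fin σc, p (Sum.inl i) = 1/2 := fun i => hXmean i
    have h2 : ∀ j : Fin σf, p (Sum.inr j) = 1/2 + lam := fun j => hYmean j
    simp only [h1, h2, Finset.sum_const, Finset.card_univ, Fintype.card_fin, nsmul_eq_mul]
    rw [hm]; ring
  have hDne : D ≠ 0 := ne_of_gt hDpos
  have hfinal : Real.exp (-t * ε) * Real.exp ((t + t ^ 2 / 2) * m) ≤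
      Real.exp (-(lam ^ 2 * (σf : ℝ) ^ 2 / D)) := by
    rw [← Real.exp_add, Real.exp_le_exp]
    have h2m : 2 * m ≤ D := by rw [hm, hD]; nlinarith
    have hE : -t * ε + (t + t ^ 2 / 2) * m = t * (lam * σf) + m * t ^ 2 / 2 := by
      rw [hm, hε]; ring
    rw [hE, ht]
    have he : -(2 * lam * (σf:ℝ) / D) * (lam * σf) = -(2 * (lam ^ 2 * (σf:ℝ) ^ 2 / D)) := by
      rw [neg_mul, div_mul_eq_mul_div]
      ring_nf
    have key : m * (-(2 * lam * (σf:ℝ) / D)) ^ 2 / 2 ≤ lam ^ 2 * (σf:ℝ) ^ 2 / D := by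
      have heq : m * (-(2 * lam * (σf:ℝ) / D)) ^ 2 / 2 = 2 * m * (lam ^ 2 * (σf:ℝ) ^ 2) / D ^ 2 := by
        field_simp
      rw [heq, div_le_div_iff₀ (by positivity) hDpos]
      nlinarith [mul_nonneg (mul_nonneg (sq_nonneg lam) (sq_nonneg (σf:ℝ))) hDpos.le,
        mul_le_mul_of_nonneg_right h2m
          (mul_nonneg (mul_nonneg (sq_nonneg lam) (sq_nonneg (σf:ℝ))) hDpos.le)]
    rw [he]
    linarith
  calc μ {ω | ∑ i, X i ω + ∑ j, Y j ω ≤ ((σc : ℝ) + σf) / 2}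
      = μ {ω | (∑ k, Z k) ω ≤ ε} := by
        congr 1; ext ω; simp only [Set.mem_setOf_eq, hsum ω, hε]
    _ = ENNReal.ofReal ((μ {ω | (∑ k, Z k) ω ≤ ε}).toReal) :=
        (ENNReal.ofReal_toReal (measure_ne_top μ _)).symm
    _ ≤ ENNReal.ofReal (Real.exp (-(lam ^ 2 * (σf : ℝ) ^ 2 / (2 * σf + σc)))) := by
        apply ENNReal.ofReal_le_ofReal
        refine hcher.trans ?_
        rw [hmgf]
        calc Real.exp (-t * ε) * ∏ k, mgf (Z k) μ t
            ≤ Real.exp (-t * ε) * Real.exp ((t + t ^ 2 / 2) * ∑ k, p k) := by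
              apply mul_le_mul_of_nonneg_left hprod (Real.exp_nonneg _)
          _ = Real.exp (-t * ε) * Real.exp ((t + t ^ 2 / 2) * m) := by rw [hsump]
          _ ≤ Real.exp (-(lam ^ 2 * (σf : ℝ) ^ 2 / D)) := hfinal
          _ = _ := by rw [hD]
end
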